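/- arXiv:1906.10949 — 3 statements merged into one kernel-verified Lean document; each statement's English description precedes it below -/
import Mathlib

section
/- For all fixed reals 0 < τ ≤ t, lim_{n→∞} (1/α(n)) Σ_{k≥1} n² t τ p_k² e^{−n t p_k} (1 − e^{−n τ p_k}) = θ Γ(2 − θ) · ( τ t^{θ−1} − t τ (t + τ)^{θ−2} ), where Γ is the Gamma function. -/
open Filter Topology Real MeasureTheory Set

noncomputable def mmAF (p : ℕ → ℝ) (x : ℝ) : ℝ := (Set.ncard {i : ℕ | p i ≥ 1 / x} : ℝ)

lemma mm_finite {p : ℕ → ℝ} (hsum : Summable p) {ε : ℝ} (hε : 0 < ε) :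
    {i : ℕ | p i ≥ ε}.Finite := by
  have h0 : Tendsto p atTop (𝓝 0) := hsum.tendsto_atTop_zero
  have hev : ∀ᶠ i in atTop, p i < ε := h0.eventually_lt_const hε
  obtain ⟨N, hN⟩ := hev.exists_forall_of_atTop
  refine Set.Finite.subset (Set.finite_Iio N) ?_
  intro i hi
  simp only [Set.mem_setOf_eq] at hi
  by_contra h
  exact absurd hi (not_le.mpr (hN i (not_lt.mp (by simpa [Set.mem_Iio] using h))))

lemma mm_AF_nonneg (p : ℕ → ℝ) (x : ℝ) : 0 ≤ mmAF p x := Nat.cast_nonneg _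

lemma mm_AF_finite {p : ℕ → ℝ} (hsum : Summable p) {x : ℝ} (hx : 0 < x) :
    {i : ℕ | p i ≥ 1 / x}.Finite := mm_finite hsum (by positivity)

lemma mm_AF_mono {p : ℕ → ℝ} (hsum : Summable p) {x y : ℝ} (hx : 0 < x) (hxy : x ≤ y) :
    mmAF p x ≤ mmAF p y := by
  have hsub : {i : ℕ | p i ≥ 1 / x} ⊆ {i : ℕ | p i ≥ 1 / y} := by
    intro i hi
    exact le_trans (one_div_le_one_div_of_le hx hxy) hi
  unfold mmAF
  exact_mod_cast Set.ncard_le_ncard hsub (mm_AF_finite hsum (lt_of_lt_of_le hx hxy))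

lemma mm_AF_one_le {p : ℕ → ℝ} (hsum : Summable p) (hp0 : 0 < p 0) {x : ℝ}
    (hx : 1 / p 0 ≤ x) : 1 ≤ mmAF p x := by
  have hxpos : 0 < x := lt_of_lt_of_le (by positivity) hx
  have h0 : 0 ∈ {i : ℕ | p i ≥ 1 / x} := by
    simp only [Set.mem_setOf_eq, ge_iff_le]
    rw [div_le_iff₀ hxpos]
    rw [div_le_iff₀ hp0] at hx
    linarith [hx, mul_comm x (p 0)]
  have h1 : 0 < {i : ℕ | p i ≥ 1 / x}.ncard :=
    (Set.ncard_pos (mm_AF_finite hsum hxpos)).mpr ⟨0, h0⟩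
  unfold mmAF
  exact_mod_cast h1

open scoped Classical in
lemma mm_tsum_ite_eq_ncard {S : Set ℕ} (hS : S.Finite) :
    ∑' k, (if k ∈ S then (1 : ℝ) else 0) = S.ncard := by
  rw [tsum_eq_sum (s := hS.toFinset)
    (by intro k hk; rw [Set.Finite.mem_toFinset] at hk; simp [hk])]
  rw [Set.ncard_eq_toFinset_card _ hS]
  rw [Finset.sum_congr rfl (fun k hk => if_pos ((Set.Finite.mem_toFinset hS).mp hk))]
  simp

lemma mm_AF_eq {p : ℕ → ℝ} {θ : ℝ} {L : ℝ → ℝ}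
    (hα : ∀ x > (0 : ℝ), ((Set.ncard {i : ℕ | p i ≥ 1 / x} : ℝ)) = x ^ θ * L x)
    {x : ℝ} (hx : 0 < x) : mmAF p x = x ^ θ * L x := hα x hx

lemma mm_ratio {p : ℕ → ℝ} (hsum : Summable p) (hp0 : 0 < p 0) {θ : ℝ} {L : ℝ → ℝ}
    (hL : ∀ c > (0 : ℝ), Tendsto (fun x => L (c * x) / L x) atTop (𝓝 1))
    (hα : ∀ x > (0 : ℝ), ((Set.ncard {i : ℕ | p i ≥ 1 / x} : ℝ)) = x ^ θ * L x)
    {c : ℝ} (hc : 0 < c) :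
    Tendsto (fun x : ℝ => mmAF p (c * x) / mmAF p x) atTop (𝓝 (c ^ θ)) := by
  have h := (hL c hc).const_mul (c ^ θ)
  rw [mul_one] at h
  refine Tendsto.congr' ?_ h
  filter_upwards [eventually_gt_atTop 0] with x hx
  rw [mm_AF_eq hα (by positivity), mm_AF_eq hα hx,
    Real.mul_rpow hc.le hx.le]
  have hxθ : x ^ θ ≠ 0 := ne_of_gt (Real.rpow_pos_of_pos hx θ)
  rw [show c ^ θ * x ^ θ * L (c * x) = x ^ θ * (c ^ θ * L (c * x)) by ring,
    mul_div_mul_left _ _ hxθ, mul_div_assoc]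

lemma mm_ratio_nat {p : ℕ → ℝ} (hsum : Summable p) (hp0 : 0 < p 0) {θ : ℝ} {L : ℝ → ℝ}
    (hL : ∀ c > (0 : ℝ), Tendsto (fun x => L (c * x) / L x) atTop (𝓝 1))
    (hα : ∀ x > (0 : ℝ), ((Set.ncard {i : ℕ | p i ≥ 1 / x} : ℝ)) = x ^ θ * L x)
    {c : ℝ} (hc : 0 < c) :
    Tendsto (fun n : ℕ => mmAF p (c * n) / mmAF p n) atTop (𝓝 (c ^ θ)) :=
  (mm_ratio hsum hp0 hL hα hc).comp tendsto_natCast_atTop_atTop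

lemma mm_doubling {p : ℕ → ℝ} (hsum : Summable p) (hp0 : 0 < p 0) {θ : ℝ}
    (hθ : θ ∈ Set.Ioo (0:ℝ) 1) {L : ℝ → ℝ}
    (hL : ∀ c > (0 : ℝ), Tendsto (fun x => L (c * x) / L x) atTop (𝓝 1))
    (hα : ∀ x > (0 : ℝ), ((Set.ncard {i : ℕ | p i ≥ 1 / x} : ℝ)) = x ^ θ * L x) :
    ∃ X₀ : ℝ, 1 ≤ X₀ ∧ 1 / p 0 ≤ X₀ ∧
      ∀ x ≥ X₀, mmAF p (2 * x) ≤ 2 ^ ((1 + θ)/2) * mmAF p x := by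
  set θ' := (1 + θ)/2 with hθ'
  have hlt : (2:ℝ) ^ θ < 2 ^ θ' := by
    rw [Real.rpow_lt_rpow_left_iff one_lt_two, hθ']
    linarith [hθ.2]
  have hev : ∀ᶠ x : ℝ in atTop, mmAF p (2 * x) / mmAF p x < 2 ^ θ' :=
    (mm_ratio hsum hp0 hL hα two_pos).eventually_lt_const hlt
  obtain ⟨N, hN⟩ := hev.exists_forall_of_atTop
  refine ⟨max N (max 1 (1 / p 0)), le_max_of_le_right (le_max_left _ _),
    le_max_of_le_right (le_max_right _ _), ?_⟩
  intro x hx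
  have hx1 : 1 ≤ x := le_trans (le_max_of_le_right (le_max_left _ _)) hx
  have hxp : 1 / p 0 ≤ x := le_trans (le_max_of_le_right (le_max_right _ _)) hx
  have hpos : 0 < mmAF p x := lt_of_lt_of_le one_pos (mm_AF_one_le hsum hp0 hxp)
  have := hN x (le_trans (le_max_left _ _) hx)
  rw [div_lt_iff₀ hpos] at this
  linarith

lemma mm_doubling_iter {p : ℕ → ℝ} (hsum : Summable p) {θ' X₀ : ℝ}
    (hdb : ∀ x ≥ X₀, mmAF p (2 * x) ≤ 2 ^ θ' * mmAF p x)
    (hX1 : 1 ≤ X₀) :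
    ∀ j : ℕ, ∀ x ≥ X₀, mmAF p (2 ^ j * x) ≤ (2 ^ θ' : ℝ) ^ j * mmAF p x := by
  intro j
  induction j with
  | zero => intro x hx; simp
  | succ j ih =>
    intro x hx
    have hx0 : (0:ℝ) < x := lt_of_lt_of_le one_pos (le_trans hX1 hx)
    have h2x : X₀ ≤ 2 * x := le_trans hx (by linarith)
    have h1 : mmAF p (2 ^ (j+1) * x) = mmAF p (2 ^ j * (2 * x)) := by ring_nf
    have h2 := ih (2 * x) h2x
    have h3 := hdb x hx
    have hnn : (0:ℝ) ≤ (2 ^ θ' : ℝ) ^ j := by positivity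
    calc mmAF p (2 ^ (j+1) * x) = mmAF p (2 ^ j * (2 * x)) := h1
      _ ≤ (2 ^ θ' : ℝ) ^ j * mmAF p (2 * x) := h2
      _ ≤ (2 ^ θ' : ℝ) ^ j * (2 ^ θ' * mmAF p x) := by
          exact mul_le_mul_of_nonneg_left h3 hnn
      _ = (2 ^ θ' : ℝ) ^ (j+1) * mmAF p x := by ring

lemma mm_dom {p : ℕ → ℝ} (hsum : Summable p) (hp0 : 0 < p 0) {θ' X₀ : ℝ}
    (hθ'0 : 0 ≤ θ')
    (hdb : ∀ x ≥ X₀, mmAF p (2 * x) ≤ 2 ^ θ' * mmAF p x)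
    (hX1 : 1 ≤ X₀) (hXp : 1 / p 0 ≤ X₀) :
    ∀ x ≥ X₀, ∀ s : ℝ, 0 < s →
      mmAF p (x / s) ≤ 2 ^ θ' * (s ^ (-θ') + 1) * mmAF p x := by
  intro x hx s hs
  have hx0 : (0:ℝ) < x := lt_of_lt_of_le one_pos (le_trans hX1 hx)
  have hAx : 0 ≤ mmAF p x := mm_AF_nonneg p x
  have hone_le : (1:ℝ) ≤ 2 ^ θ' * (s ^ (-θ') + 1) := by
    have h1 : (1:ℝ) ≤ 2 ^ θ' := Real.one_le_rpow one_le_two hθ'0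
    have h2 : (0:ℝ) ≤ s ^ (-θ') := Real.rpow_nonneg hs.le _
    nlinarith
  rcases le_or_gt 1 s with hs1 | hs1
  · -- x / s ≤ x
    have h1 : mmAF p (x / s) ≤ mmAF p x :=
      mm_AF_mono hsum (by positivity) (by
        rw [div_le_iff₀ hs]; nlinarith)
    calc mmAF p (x / s) ≤ mmAF p x := h1
      _ = 1 * mmAF p x := (one_mul _).symm
      _ ≤ 2 ^ θ' * (s ^ (-θ') + 1) * mmAF p x := mul_le_mul_of_nonneg_right hone_le hAx
  · -- 0 < s < 1
    set j : ℕ := ⌈Real.logb 2 (1 / s)⌉₊ with hj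
    have hinv1 : (1:ℝ) ≤ 1 / s := by
      rw [le_div_iff₀ hs]; linarith
    have hlogb0 : 0 ≤ Real.logb 2 (1 / s) := Real.logb_nonneg one_lt_two hinv1
    have hrp : (2:ℝ) ^ Real.logb 2 (1 / s) = 1 / s :=
      Real.rpow_logb two_pos (by norm_num) (by positivity)
    have h1 : 1 / s ≤ (2:ℝ) ^ j := by
      rw [← Real.rpow_natCast 2 j, ← hrp]
      exact Real.rpow_le_rpow_left_iff one_lt_two |>.mpr (Nat.le_ceil _)
    have h2 : ((2:ℝ) ^ j : ℝ) ≤ 2 / s := by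
      have hcl : (j:ℝ) ≤ Real.logb 2 (1 / s) + 1 := (Nat.ceil_lt_add_one hlogb0).le
      calc ((2:ℝ) ^ j : ℝ) = (2:ℝ) ^ (j:ℝ) := (Real.rpow_natCast 2 j).symm
        _ ≤ (2:ℝ) ^ (Real.logb 2 (1 / s) + 1) :=
            Real.rpow_le_rpow_left_iff one_lt_two |>.mpr hcl
        _ = (1 / s) * 2 := by rw [Real.rpow_add two_pos, hrp, Real.rpow_one]
        _ = 2 / s := by ring
    have hxs : x / s ≤ 2 ^ j * x := by
      have : x / s = (1 / s) * x := by ring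
      rw [this]
      exact mul_le_mul_of_nonneg_right h1 hx0.le
    have hiter := mm_doubling_iter hsum hdb hX1 j x hx
    have hstep : mmAF p (x / s) ≤ (2 ^ θ' : ℝ) ^ j * mmAF p x :=
      le_trans (mm_AF_mono hsum (by positivity) hxs) hiter
    have hpow : ((2:ℝ) ^ θ' : ℝ) ^ j = ((2:ℝ) ^ j : ℝ) ^ θ' := by
      rw [← Real.rpow_natCast ((2:ℝ) ^ θ') j, ← Real.rpow_natCast (2:ℝ) j,
        ← Real.rpow_mul (by norm_num), ← Real.rpow_mul (by norm_num), mul_comm]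
    have hpb : ((2:ℝ) ^ j : ℝ) ^ θ' ≤ 2 ^ θ' * s ^ (-θ') := by
      calc ((2:ℝ) ^ j : ℝ) ^ θ' ≤ (2 / s) ^ θ' :=
            Real.rpow_le_rpow (by positivity) h2 hθ'0
        _ = 2 ^ θ' / s ^ θ' := Real.div_rpow (by norm_num) hs.le θ'
        _ = 2 ^ θ' * s ^ (-θ') := by
            rw [Real.rpow_neg hs.le, div_eq_mul_inv]
    calc mmAF p (x / s) ≤ (2 ^ θ' : ℝ) ^ j * mmAF p x := hstep
      _ ≤ (2 ^ θ' * s ^ (-θ')) * mmAF p x := by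
          rw [hpow]; exact mul_le_mul_of_nonneg_right hpb hAx
      _ ≤ 2 ^ θ' * (s ^ (-θ') + 1) * mmAF p x := by
          have h1 : (0:ℝ) < 2 ^ θ' := Real.rpow_pos_of_pos two_pos _
          nlinarith

lemma mm_hasDeriv {a : ℝ} (s : ℝ) :
    HasDerivAt (fun u : ℝ => u ^ 2 * Real.exp (-(a * u)))
      ((2 * s - a * s ^ 2) * Real.exp (-(a * s))) s := by
  have h1 : HasDerivAt (fun u : ℝ => u ^ 2) (2 * s) s := by
    simpa using hasDerivAt_pow 2 s
  have h2 : HasDerivAt (fun u : ℝ => Real.exp (-(a * u)))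
      (-a * Real.exp (-(a * s))) s := by
    have hlin : HasDerivAt (fun u : ℝ => -(a * u)) (-a) s := by
      have h := ((hasDerivAt_id s).const_mul a).neg
      rw [mul_one] at h
      exact h
    simpa [mul_comm] using hlin.exp
  have := h1.mul h2
  exact this.congr_deriv (by ring)

lemma mm_ftc {a : ℝ} {u : ℝ} (hu : 0 ≤ u) :
    ∫ s in Set.Ioc (0:ℝ) u, (2 * s - a * s ^ 2) * Real.exp (-(a * s)) =
      u ^ 2 * Real.exp (-(a * u)) := by
  rw [← intervalIntegral.integral_of_le hu]
  have hcont : Continuous (fun s : ℝ => (2 * s - a * s ^ 2) * Real.exp (-(a * s))) := by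
    continuity
  rw [intervalIntegral.integral_eq_sub_of_hasDerivAt
    (fun x _ => mm_hasDeriv x) (hcont.intervalIntegrable 0 u)]
  simp

lemma mm_int_rpow {b r : ℝ} (hb : 0 < b) (hr : 0 < r) :
    IntegrableOn (fun s : ℝ => s ^ (r - 1) * Real.exp (-(b * s))) (Set.Ioi 0) := by
  have := integrableOn_rpow_mul_exp_neg_mul_rpow
    (show (-1 : ℝ) < r - 1 by linarith) one_pos hb
  simpa [Real.rpow_one, neg_mul] using this

lemma mm_identity {p : ℕ → ℝ} (hsum : Summable p) (hpos : ∀ k, 0 < p k)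
    (hmono : Antitone p) {a : ℝ} (ha : 0 < a) {n : ℕ} (hn : 1 ≤ n) :
    ∑' k, ((n:ℝ) * p k) ^ 2 * Real.exp (-(a * ((n:ℝ) * p k))) =
      ∫ s in Set.Ioi (0:ℝ),
        ((2 * s - a * s ^ 2) * Real.exp (-(a * s))) * mmAF p ((n:ℝ) / s) := by
  classical
  set f : ℝ → ℝ := fun s => (2 * s - a * s ^ 2) * Real.exp (-(a * s)) with hf
  have hfc : Continuous f := by
    apply Continuous.mul
    · continuity
    · exact Real.continuous_exp.comp (by continuity)
  set F : ℕ → ℝ → ℝ := fun k => Set.indicator (Set.Ioc 0 ((n:ℝ) * p k)) f with hF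
  have hn0 : (0:ℝ) < n := by exact_mod_cast hn
  have hu : ∀ k, 0 < (n:ℝ) * p k := fun k => mul_pos hn0 (hpos k)
  have hFint : ∀ k, Integrable (F k) := by
    intro k
    rw [hF, integrable_indicator_iff measurableSet_Ioc]
    exact hfc.integrableOn_Ioc
  set C : ℝ := 2 * ((n:ℝ) * p 0) + a * ((n:ℝ) * p 0) ^ 2 with hC
  have hCpos : 0 < C := by
    have := hu 0; positivity
  have hnormint : ∀ k, ∫ s, ‖F k s‖ ≤ C * ((n:ℝ) * p k) := by
    intro k
    have hmeas : MeasurableSet (Set.Ioc (0:ℝ) ((n:ℝ) * p k)) := measurableSet_Ioc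
    have h1 : (fun s => ‖F k s‖) =
        Set.indicator (Set.Ioc 0 ((n:ℝ) * p k)) (fun s => ‖f s‖) :=
      funext fun s => norm_indicator_eq_indicator_norm f s
    rw [h1, integral_indicator hmeas]
    have hb : ∀ s ∈ Set.Ioc (0:ℝ) ((n:ℝ) * p k), ‖f s‖ ≤ C := by
      intro s hs
      obtain ⟨hs0, hsu⟩ := hs
      have hsu0 : s ≤ (n:ℝ) * p 0 := le_trans hsu
        (mul_le_mul_of_nonneg_left (hmono (Nat.zero_le k)) hn0.le)
      have hexp : Real.exp (-(a * s)) ≤ 1 := by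
        rw [Real.exp_le_one_iff]
        nlinarith
      have hexp0 : 0 < Real.exp (-(a * s)) := Real.exp_pos _
      have habs : |2 * s - a * s ^ 2| ≤ C := by
        have hsq : s ^ 2 ≤ ((n:ℝ) * p 0) ^ 2 := by nlinarith
        rw [abs_le]
        constructor <;> nlinarith [mul_le_mul_of_nonneg_left hsq ha.le]
      rw [hf, Real.norm_eq_abs, abs_mul, abs_of_pos hexp0]
      nlinarith [abs_nonneg (2 * s - a * s ^ 2)]
    have hint1 : IntegrableOn (fun s => ‖f s‖) (Set.Ioc 0 ((n:ℝ) * p k)) :=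
      hfc.norm.integrableOn_Ioc
    have hint2 : IntegrableOn (fun _ : ℝ => C) (Set.Ioc 0 ((n:ℝ) * p k)) :=
      integrableOn_const measure_Ioc_lt_top.ne
    calc ∫ s in Set.Ioc (0:ℝ) ((n:ℝ) * p k), ‖f s‖
        ≤ ∫ _ in Set.Ioc (0:ℝ) ((n:ℝ) * p k), C :=
          setIntegral_mono_on hint1 hint2 hmeas hb
      _ = ((n:ℝ) * p k) * C := by
          rw [setIntegral_const, Real.volume_real_Ioc, smul_eq_mul, sub_zero,
            max_eq_left (hu k).le]
      _ = C * ((n:ℝ) * p k) := mul_comm _ _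
  have hsummable : Summable fun k => ∫ s, ‖F k s‖ := by
    refine Summable.of_nonneg_of_le
      (fun k => integral_nonneg fun s => norm_nonneg _)
      (fun k => hnormint k) ?_
    have : Summable fun k => (C * (n:ℝ)) * p k := hsum.mul_left _
    refine this.congr fun k => by ring
  have key := integral_tsum_of_summable_integral_norm hFint hsummable
  have hcompl : ∀ s : ℝ, s ∉ Set.Ioi (0:ℝ) → (∑' k, F k s) = 0 := by
    intro s hs
    have : ∀ k, F k s = 0 := by
      intro k
      apply Set.indicator_of_notMem
      intro hmem
      exact hs hmem.1
    simp [this]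
  have hEqOn : Set.EqOn (fun s => ∑' k, F k s)
      (fun s => f s * mmAF p ((n:ℝ) / s)) (Set.Ioi 0) := by
    intro s hs
    have hs0 : (0:ℝ) < s := hs
    set S : Set ℕ := {k | s ≤ (n:ℝ) * p k} with hS
    have hSfin : S.Finite := by
      have heq : S = {k | p k ≥ s / (n:ℝ)} := by
        ext k
        simp only [hS, Set.mem_setOf_eq, ge_iff_le, div_le_iff₀ hn0]
        rw [mul_comm]
      rw [heq]
      exact mm_finite hsum (div_pos hs0 hn0)
    have hFk : ∀ k, F k s = if k ∈ S then f s else 0 := by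
      intro k
      rw [hF]
      simp only [Set.indicator_apply, Set.mem_Ioc, hS, Set.mem_setOf_eq]
      simp [hs0]
    have h2 : (∑' k, F k s) = f s * (S.ncard : ℝ) := by
      rw [show (fun k => F k s) = fun k => f s * (if k ∈ S then (1:ℝ) else 0) by
        funext k; rw [hFk k]; by_cases h : k ∈ S <;> simp [h]]
      rw [tsum_mul_left, mm_tsum_ite_eq_ncard hSfin]
    have h3 : (S.ncard : ℝ) = mmAF p ((n:ℝ) / s) := by
      have heq : {i : ℕ | p i ≥ 1 / ((n:ℝ) / s)} = S := by
        ext k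
        simp only [hS, Set.mem_setOf_eq, ge_iff_le, one_div_div, div_le_iff₀ hn0]
        rw [mul_comm]
      rw [mmAF, heq]
    simp only [h2, h3]
  calc ∑' k, ((n:ℝ) * p k) ^ 2 * Real.exp (-(a * ((n:ℝ) * p k)))
      = ∑' k, ∫ s, F k s := by
        congr 1
        funext k
        rw [hF]
        simp only
        rw [integral_indicator measurableSet_Ioc, mm_ftc (hu k).le]
    _ = ∫ s, ∑' k, F k s := key
    _ = ∫ s in Set.Ioi (0:ℝ), ∑' k, F k s :=
        (setIntegral_eq_integral_of_forall_compl_eq_zero hcompl).symm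
    _ = ∫ s in Set.Ioi (0:ℝ), f s * mmAF p ((n:ℝ) / s) :=
        setIntegral_congr_fun measurableSet_Ioi hEqOn

lemma mm_limit_integral {θ a : ℝ} (hθ : θ ∈ Set.Ioo (0:ℝ) 1) (ha : 0 < a) :
    ∫ s in Set.Ioi (0:ℝ), ((2 * s - a * s ^ 2) * Real.exp (-(a * s))) * s ^ (-θ) =
      θ * Real.Gamma (2 - θ) * a ^ (θ - 2) := by
  have h2θ : (0:ℝ) < 2 - θ := by linarith [hθ.2]
  have h3θ : (0:ℝ) < 3 - θ := by linarith [hθ.2]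
  have h1 : IntegrableOn (fun s : ℝ => s ^ ((2 - θ) - 1) * Real.exp (-(a * s)))
      (Set.Ioi 0) := mm_int_rpow ha h2θ
  have h2 : IntegrableOn (fun s : ℝ => s ^ ((3 - θ) - 1) * Real.exp (-(a * s)))
      (Set.Ioi 0) := mm_int_rpow ha h3θ
  have hEq : Set.EqOn (fun s : ℝ => ((2 * s - a * s ^ 2) * Real.exp (-(a * s))) * s ^ (-θ))
      (fun s : ℝ => 2 * (s ^ ((2 - θ) - 1) * Real.exp (-(a * s)))
        - a * (s ^ ((3 - θ) - 1) * Real.exp (-(a * s)))) (Set.Ioi 0) := by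
    intro s hs
    have hs0 : (0:ℝ) < s := hs
    have e1 : s ^ ((2 - θ) - 1) = s * s ^ (-θ) := by
      rw [show (2 - θ) - 1 = 1 + -θ by ring, Real.rpow_add hs0, Real.rpow_one]
    have e2 : s ^ ((3 - θ) - 1) = s ^ 2 * s ^ (-θ) := by
      rw [show (3 - θ) - 1 = 2 + -θ by ring, Real.rpow_add hs0, Real.rpow_two]
    simp only [e1, e2]
    ring
  rw [setIntegral_congr_fun measurableSet_Ioi hEq,
    integral_sub ((h1.const_mul 2)) ((h2.const_mul a)),
    MeasureTheory.integral_const_mul, MeasureTheory.integral_const_mul,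
    integral_rpow_mul_exp_neg_mul_Ioi h2θ ha,
    integral_rpow_mul_exp_neg_mul_Ioi h3θ ha]
  have hΓ : Real.Gamma (3 - θ) = (2 - θ) * Real.Gamma (2 - θ) := by
    rw [show (3:ℝ) - θ = (2 - θ) + 1 by ring, Real.Gamma_add_one (ne_of_gt h2θ)]
  have key0 : ∀ r : ℝ, (1/a) ^ r = a ^ (-r) := by
    intro r
    rw [one_div, ← Real.rpow_neg_one a, ← Real.rpow_mul ha.le]
    norm_num
  have key1 : (1/a) ^ (2 - θ) = a ^ (θ - 2) := by
    rw [key0, show -(2 - θ) = θ - 2 by ring]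
  have key2 : (1/a) ^ (3 - θ) = a ^ (θ - 3) := by
    rw [key0, show -(3 - θ) = θ - 3 by ring]
  rw [hΓ, key1, key2]
  have key3 : a * a ^ (θ - 3) = a ^ (θ - 2) := by
    nth_rewrite 1 [← Real.rpow_one a]
    rw [← Real.rpow_add ha, show (1:ℝ) + (θ - 3) = θ - 2 by ring]
  rw [show a * (a ^ (θ - 3) * ((2 - θ) * Real.Gamma (2 - θ)))
      = (a * a ^ (θ - 3)) * ((2 - θ) * Real.Gamma (2 - θ)) by ring, key3]
  ring

lemma mm_one_div_rpow {s : ℝ} (hs : 0 < s) (r : ℝ) : (1/s) ^ r = s ^ (-r) := by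
  rw [one_div, ← Real.rpow_neg_one s, ← Real.rpow_mul hs.le, neg_one_mul]

lemma mm_bound_integrable {a θ' : ℝ} (ha : 0 < a) (hθ'0 : 0 < θ') (hθ'1 : θ' < 1) :
    IntegrableOn (fun s : ℝ =>
        ((2 * s + a * s ^ 2) * Real.exp (-(a * s))) * (2 ^ θ' * (s ^ (-θ') + 1)))
      (Set.Ioi 0) := by
  have g1 := mm_int_rpow ha (show (0:ℝ) < 2 - θ' by linarith)
  have g2 := mm_int_rpow ha (show (0:ℝ) < 3 - θ' by linarith)
  have g3 := mm_int_rpow ha (show (0:ℝ) < 2 by norm_num)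
  have g4 := mm_int_rpow ha (show (0:ℝ) < 3 by norm_num)
  have hG : IntegrableOn (fun s : ℝ => (2:ℝ) ^ θ' *
      ((2 * (s ^ ((2 - θ') - 1) * Real.exp (-(a * s)))
        + a * (s ^ ((3 - θ') - 1) * Real.exp (-(a * s))))
       + (2 * (s ^ ((2:ℝ) - 1) * Real.exp (-(a * s)))
        + a * (s ^ ((3:ℝ) - 1) * Real.exp (-(a * s)))))) (Set.Ioi 0) :=
    (((g1.const_mul 2).add (g2.const_mul a)).add
      ((g3.const_mul 2).add (g4.const_mul a))).const_mul _
  refine hG.congr_fun ?_ measurableSet_Ioi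
  intro s hs
  have hs0 : (0:ℝ) < s := hs
  have e1 : s ^ ((2 - θ') - 1) = s * s ^ (-θ') := by
    rw [show (2 - θ') - 1 = 1 + -θ' by ring, Real.rpow_add hs0, Real.rpow_one]
  have e2 : s ^ ((3 - θ') - 1) = s ^ 2 * s ^ (-θ') := by
    rw [show (3 - θ') - 1 = 2 + -θ' by ring, Real.rpow_add hs0, Real.rpow_two]
  have e3 : s ^ ((2:ℝ) - 1) = s := by
    rw [show (2:ℝ) - 1 = 1 by norm_num, Real.rpow_one]
  have e4 : s ^ ((3:ℝ) - 1) = s ^ 2 := by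
    rw [show (3:ℝ) - 1 = 2 by norm_num, Real.rpow_two]
  simp only [e1, e2, e3, e4]
  ring

lemma mm_master {p : ℕ → ℝ} (hsum : Summable p) (hpos : ∀ k, 0 < p k)
    (hmono : Antitone p) {θ : ℝ} (hθ : θ ∈ Set.Ioo (0:ℝ) 1) {L : ℝ → ℝ}
    (hL : ∀ c > (0 : ℝ), Tendsto (fun x => L (c * x) / L x) atTop (𝓝 1))
    (hα : ∀ x > (0 : ℝ), ((Set.ncard {i : ℕ | p i ≥ 1 / x} : ℝ)) = x ^ θ * L x)
    {a : ℝ} (ha : 0 < a) :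
    Tendsto (fun n : ℕ => (1 / mmAF p n) *
        ∑' k, ((n:ℝ) * p k) ^ 2 * Real.exp (-(a * ((n:ℝ) * p k)))) atTop
      (𝓝 (θ * Real.Gamma (2 - θ) * a ^ (θ - 2))) := by
  have hp0 : 0 < p 0 := hpos 0
  set θ' : ℝ := (1 + θ)/2 with hθ'def
  have hθ'0 : (0:ℝ) < θ' := by rw [hθ'def]; linarith [hθ.1]
  have hθ'1 : θ' < 1 := by rw [hθ'def]; linarith [hθ.2]
  obtain ⟨X₀, hX1, hXp, hdb⟩ := mm_doubling hsum hp0 hθ hL hα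
  set f : ℝ → ℝ := fun s => (2 * s - a * s ^ 2) * Real.exp (-(a * s)) with hf
  have hfc : Continuous f := by
    apply Continuous.mul
    · continuity
    · exact Real.continuous_exp.comp (by continuity)
  set bound : ℝ → ℝ := fun s =>
    ((2 * s + a * s ^ 2) * Real.exp (-(a * s))) * (2 ^ θ' * (s ^ (-θ') + 1)) with hbdef
  set F : ℕ → ℝ → ℝ := fun n s => (1 / mmAF p n) * (f s * mmAF p ((n:ℝ) / s)) with hFdef
  have habs : ∀ s : ℝ, 0 < s → |f s| ≤ (2 * s + a * s ^ 2) * Real.exp (-(a * s)) := by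
    intro s hs0
    rw [hf, abs_mul, abs_of_pos (Real.exp_pos _)]
    apply mul_le_mul_of_nonneg_right _ (Real.exp_pos _).le
    rw [abs_le]
    constructor <;> nlinarith [sq_nonneg s]
  -- dominated convergence
  have hDCT : Tendsto (fun n : ℕ => ∫ s in Set.Ioi (0:ℝ), F n s) atTop
      (𝓝 (∫ s in Set.Ioi (0:ℝ), f s * s ^ (-θ))) := by
    apply MeasureTheory.tendsto_integral_filter_of_dominated_convergence bound
    · -- measurability
      filter_upwards [eventually_ge_atTop 1] with n hn
      have hn0 : (0:ℝ) < n := by exact_mod_cast hn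
      have hanti : AntitoneOn (fun s : ℝ => mmAF p ((n:ℝ) / s)) (Set.Ioi 0) := by
        intro s hs s' hs' hss'
        exact mm_AF_mono hsum (div_pos hn0 hs')
          (div_le_div_of_nonneg_left hn0.le (Set.mem_Ioi.mp hs) hss')
      have hA : AEMeasurable (fun s : ℝ => mmAF p ((n:ℝ) / s))
          (volume.restrict (Set.Ioi 0)) :=
        aemeasurable_restrict_of_antitoneOn measurableSet_Ioi hanti
      exact ((hfc.aestronglyMeasurable.mul hA.aestronglyMeasurable).const_mul _)
    · -- bound
      filter_upwards [eventually_ge_atTop ⌈X₀⌉₊] with n hn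
      have hnX : X₀ ≤ (n:ℝ) := le_trans (Nat.le_ceil _) (by exact_mod_cast hn)
      have hn1 : (1:ℝ) ≤ (n:ℝ) := le_trans hX1 hnX
      rw [ae_restrict_iff' measurableSet_Ioi]
      apply ae_of_all
      intro s hs
      have hs0 : (0:ℝ) < s := hs
      have hAn1 : 1 ≤ mmAF p n := mm_AF_one_le hsum hp0 (le_trans hXp hnX)
      have hAn0 : 0 < mmAF p n := lt_of_lt_of_le one_pos hAn1
      have hdom := mm_dom hsum hp0 hθ'0.le hdb hX1 hXp (n:ℝ) hnX s hs0
      have hAnn : 0 ≤ mmAF p ((n:ℝ)/s) := mm_AF_nonneg _ _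
      have hB0 : 0 ≤ (2 * s + a * s ^ 2) * Real.exp (-(a * s)) := by positivity
      rw [hFdef]
      simp only [norm_mul, Real.norm_eq_abs]
      rw [abs_of_pos (by positivity : (0:ℝ) < 1 / mmAF p n),
        abs_of_nonneg hAnn]
      calc 1 / mmAF p n * (|f s| * mmAF p ((n:ℝ)/s))
          ≤ 1 / mmAF p n * (((2 * s + a * s ^ 2) * Real.exp (-(a * s)))
              * (2 ^ θ' * (s ^ (-θ') + 1) * mmAF p n)) := by
            apply mul_le_mul_of_nonneg_left _ (by positivity)
            exact mul_le_mul (habs s hs0) hdom hAnn hB0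
        _ = bound s := by
            rw [hbdef]
            field_simp
    · exact mm_bound_integrable ha hθ'0 hθ'1
    · -- pointwise limit
      rw [ae_restrict_iff' measurableSet_Ioi]
      apply ae_of_all
      intro s hs
      have hs0 : (0:ℝ) < s := hs
      have hratio := mm_ratio_nat hsum hp0 hL hα (show (0:ℝ) < 1/s by positivity)
      have h2 := hratio.const_mul (f s)
      rw [mm_one_div_rpow hs0 θ] at h2
      apply h2.congr
      intro n
      rw [hFdef]
      simp only
      rw [show (1/s) * (n:ℝ) = (n:ℝ)/s by ring]
      ring
  rw [show (∫ s in Set.Ioi (0:ℝ), f s * s ^ (-θ))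
      = θ * Real.Gamma (2 - θ) * a ^ (θ - 2) from mm_limit_integral hθ ha] at hDCT
  apply hDCT.congr'
  filter_upwards [eventually_ge_atTop 1] with n hn
  rw [hFdef]
  simp only
  rw [MeasureTheory.integral_const_mul, ← mm_identity hsum hpos hmono ha hn]

/-- Limit covariance of the scaled missing mass process, `θ ∈ (0,1)`: for `0 < τ ≤ t`,
`(1/α(n)) ∑_k n² t τ p_k² e^{−n t p_k}(1 − e^{−n τ p_k})
  → θ Γ(2−θ) (τ t^{θ−1} − t τ (t+τ)^{θ−2})`. -/
theorem limit_covariance_missing_mass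
    (p : ℕ → ℝ) (hp_pos : ∀ k, 0 < p k) (hp_mono : Antitone p)
    (hp_sum : ∑' k, p k = 1)
    (θ : ℝ) (hθ : θ ∈ Set.Ioo (0 : ℝ) 1)
    (L : ℝ → ℝ)
    (hL : ∀ c > (0 : ℝ), Tendsto (fun x => L (c * x) / L x) atTop (𝓝 1))
    (hα : ∀ x > (0 : ℝ), ((Set.ncard {i : ℕ | p i ≥ 1 / x} : ℝ)) = x ^ θ * L x)
    (τ t : ℝ) (hτ : 0 < τ) (hτt : τ ≤ t) :
    Tendsto (fun n : ℕ =>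
        (1 / ((Set.ncard {i : ℕ | p i ≥ 1 / (n : ℝ)} : ℝ))) *
          ∑' k, (n : ℝ) ^ 2 * t * τ * (p k) ^ 2 * Real.exp (-((n : ℝ) * t * p k))
            * (1 - Real.exp (-((n : ℝ) * τ * p k))))
      atTop
      (𝓝 (θ * Real.Gamma (2 - θ)
        * (τ * t ^ (θ - 1) - t * τ * (t + τ) ^ (θ - 2)))) := by
  have hsum : Summable p := by
    by_contra h
    rw [tsum_eq_zero_of_not_summable h] at hp_sum
    norm_num at hp_sum
  have ht0 : (0:ℝ) < t := lt_of_lt_of_le hτ hτt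
  have hts0 : (0:ℝ) < t + τ := by linarith
  -- two instances of the master lemma
  have h1 := mm_master hsum hp_pos hp_mono hθ hL hα ht0
  have h2 := mm_master hsum hp_pos hp_mono hθ hL hα hts0
  have hcomb := ((h1.const_mul (t*τ)).sub (h2.const_mul (t*τ)))
  have hval : t*τ*(θ * Real.Gamma (2 - θ) * t ^ (θ - 2))
      - t*τ*(θ * Real.Gamma (2 - θ) * (t + τ) ^ (θ - 2))
      = θ * Real.Gamma (2 - θ) * (τ * t ^ (θ - 1) - t * τ * (t + τ) ^ (θ - 2)) := by
    have ht1 : t * t ^ (θ - 2) = t ^ (θ - 1) := by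
      nth_rewrite 1 [← Real.rpow_one t]
      rw [← Real.rpow_add ht0, show (1:ℝ) + (θ - 2) = θ - 1 by ring]
    rw [← ht1]
    ring
  rw [hval] at hcomb
  apply hcomb.congr
  intro n
  -- rewrite the summand
  have hterm : ∀ k, (n : ℝ) ^ 2 * t * τ * (p k) ^ 2 * Real.exp (-((n : ℝ) * t * p k))
      * (1 - Real.exp (-((n : ℝ) * τ * p k)))
      = t*τ*(((n:ℝ) * p k) ^ 2 * Real.exp (-(t * ((n:ℝ) * p k))))
        - t*τ*(((n:ℝ) * p k) ^ 2 * Real.exp (-((t+τ) * ((n:ℝ) * p k)))) := by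
    intro k
    have e1 : -((n : ℝ) * t * p k) = -(t * ((n:ℝ) * p k)) := by ring
    have e2 : -((n : ℝ) * τ * p k) = -(τ * ((n:ℝ) * p k)) := by ring
    have e3 : Real.exp (-((t+τ) * ((n:ℝ) * p k)))
        = Real.exp (-(t * ((n:ℝ) * p k))) * Real.exp (-(τ * ((n:ℝ) * p k))) := by
      rw [← Real.exp_add]; congr 1; ring
    rw [e1, e2, e3]
    ring
  have hn0 : (0:ℝ) ≤ (n:ℝ) := Nat.cast_nonneg n
  have hs1 : Summable (fun k => ((n:ℝ) * p k) ^ 2 * Real.exp (-(t * ((n:ℝ) * p k)))) := by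
    refine Summable.of_nonneg_of_le (fun k => by positivity) (fun k => ?_)
      (hsum.mul_left ((n:ℝ)^2 * p 0))
    have hexp : Real.exp (-(t * ((n:ℝ) * p k))) ≤ 1 := by
      rw [Real.exp_le_one_iff]
      have := (hp_pos k).le
      nlinarith [mul_nonneg (mul_nonneg ht0.le hn0) this]
    have hpk : p k ≤ p 0 := hp_mono (Nat.zero_le k)
    have h2 : ((n:ℝ) * p k) ^ 2 ≤ (n:ℝ)^2 * p 0 * p k := by nlinarith [hp_pos k]
    nlinarith [Real.exp_pos (-(t * ((n:ℝ) * p k))), sq_nonneg ((n:ℝ) * p k)]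
  have hs2 : Summable (fun k => ((n:ℝ) * p k) ^ 2 * Real.exp (-((t+τ) * ((n:ℝ) * p k)))) := by
    refine Summable.of_nonneg_of_le (fun k => by positivity) (fun k => ?_)
      (hsum.mul_left ((n:ℝ)^2 * p 0))
    have hexp : Real.exp (-((t+τ) * ((n:ℝ) * p k))) ≤ 1 := by
      rw [Real.exp_le_one_iff]
      have := (hp_pos k).le
      nlinarith [mul_nonneg (mul_nonneg hts0.le hn0) this]
    have hpk : p k ≤ p 0 := hp_mono (Nat.zero_le k)
    have h2 : ((n:ℝ) * p k) ^ 2 ≤ (n:ℝ)^2 * p 0 * p k := by nlinarith [hp_pos k]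
    nlinarith [Real.exp_pos (-((t+τ) * ((n:ℝ) * p k))), sq_nonneg ((n:ℝ) * p k)]
  have htsum : (∑' k, (n : ℝ) ^ 2 * t * τ * (p k) ^ 2 * Real.exp (-((n : ℝ) * t * p k))
      * (1 - Real.exp (-((n : ℝ) * τ * p k))))
      = t*τ*(∑' k, ((n:ℝ) * p k) ^ 2 * Real.exp (-(t * ((n:ℝ) * p k))))
        - t*τ*(∑' k, ((n:ℝ) * p k) ^ 2 * Real.exp (-((t+τ) * ((n:ℝ) * p k)))) := by
    rw [show (fun k => (n : ℝ) ^ 2 * t * τ * (p k) ^ 2 * Real.exp (-((n : ℝ) * t * p k))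
      * (1 - Real.exp (-((n : ℝ) * τ * p k))))
      = fun k => t*τ*(((n:ℝ) * p k) ^ 2 * Real.exp (-(t * ((n:ℝ) * p k))))
        - t*τ*(((n:ℝ) * p k) ^ 2 * Real.exp (-((t+τ) * ((n:ℝ) * p k)))) from
      funext hterm]
    rw [Summable.tsum_sub (hs1.mul_left _) (hs2.mul_left _), tsum_mul_left, tsum_mul_left]
  rw [htsum]
  show _ = (1 / mmAF p (n:ℝ)) * _
  ring
end

section
/- For all fixed reals 0 < τ ≤ t, lim_{n→∞} (1/α(n)) · (1/2) Σ_{k≥1} ( e^{−p_k n (2t − τ)} − e^{−p_k n (2t + τ)} ) = Γ(1 − θ) ( (2t + τ)^θ − (2t − τ)^θ ) / 2, and lim_{n→∞} (1/α(n)) · (1/2) Σ_{k≥1} ( e^{−p_k n t} − e^{−p_k n (t + 2τ)} ) = Γ(1 − θ) ( (t + 2τ)^θ − t^θ ) / 2, where Γ is the Gamma function. -/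
open Filter Topology Real MeasureTheory Set
open scoped ENNReal NNReal

noncomputable def AA (p : ℕ → ℝ) (x : ℝ) : ℝ := (Set.ncard {i : ℕ | p i ≥ 1 / x} : ℝ)

noncomputable def Phi (p : ℕ → ℝ) (s : ℝ) : ℝ := ∑' k, (1 - Real.exp (-(p k * s)))

lemma fin_ge {p : ℕ → ℝ} (hsum : Summable p) {c : ℝ} (hc : 0 < c) :
    {i : ℕ | p i ≥ c}.Finite := by
  have h := hsum.tendsto_atTop_zero
  have he : ∀ᶠ i in atTop, p i < c := h.eventually_lt_const hc
  rcases eventually_atTop.1 he with ⟨N, hN⟩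
  apply (Set.finite_Iio N).subset
  intro i hi
  simp only [Set.mem_setOf_eq] at hi
  by_contra h'
  exact absurd hi (not_le.2 (hN i (not_lt.1 h')))

lemma fin_gt {p : ℕ → ℝ} (hsum : Summable p) {c : ℝ} (hc : 0 < c) :
    {i : ℕ | p i > c}.Finite :=
  by
  apply (fin_ge hsum hc).subset
  intro i hi
  simp only [Set.mem_setOf_eq] at hi ⊢
  exact le_of_lt hi

lemma AA_nonpos {p : ℕ → ℝ} (hp_pos : ∀ k, 0 < p k) {x : ℝ} (hx : x ≤ 0) : AA p x = 0 := by
  have huniv : {i : ℕ | p i ≥ 1 / x} = Set.univ := by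
    ext i
    simp only [Set.mem_setOf_eq, Set.mem_univ, iff_true]
    have h1 : 1 / x ≤ 0 := div_nonpos_of_nonneg_of_nonpos zero_le_one hx
    exact le_trans h1 (hp_pos i).le
  rw [AA, huniv, Set.Infinite.ncard Set.infinite_univ]
  simp

lemma AA_mono {p : ℕ → ℝ} (hp_pos : ∀ k, 0 < p k) (hsum : Summable p) : Monotone (AA p) := by
  intro x y hxy
  rcases le_or_gt x 0 with hx | hx
  · rw [AA_nonpos hp_pos hx]
    exact Nat.cast_nonneg _
  · have hy : 0 < y := lt_of_lt_of_le hx hxy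
    have hsub : {i : ℕ | p i ≥ 1 / x} ⊆ {i : ℕ | p i ≥ 1 / y} := by
      intro i hi
      exact le_trans (one_div_le_one_div_of_le hx hxy) hi
    have hfin : {i : ℕ | p i ≥ 1 / y}.Finite := fin_ge hsum (by positivity)
    have := Set.ncard_le_ncard hsub hfin
    unfold AA
    exact_mod_cast this

lemma AA_one_le {p : ℕ → ℝ} (hp_pos : ∀ k, 0 < p k) (hsum : Summable p) {x : ℝ}
    (hx : 1 / p 0 ≤ x) : 1 ≤ AA p x := by
  have hp0 := hp_pos 0
  have hx0 : 0 < x := lt_of_lt_of_le (by positivity) hx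
  have h0 : 0 ∈ {i : ℕ | p i ≥ 1 / x} := by
    simp only [Set.mem_setOf_eq, ge_iff_le]
    rw [div_le_iff₀ hx0]
    rw [div_le_iff₀ hp0] at hx
    nlinarith
  have hfin : {i : ℕ | p i ≥ 1 / x}.Finite := fin_ge hsum (by positivity)
  have h1 : 1 ≤ {i : ℕ | p i ≥ 1 / x}.ncard := by
    have : {i : ℕ | p i ≥ 1 / x}.Nonempty := ⟨0, h0⟩
    have := (Set.ncard_pos hfin).2 this
    omega
  unfold AA
  exact_mod_cast h1

lemma AA_nonneg (p : ℕ → ℝ) (x : ℝ) : 0 ≤ AA p x := Nat.cast_nonneg _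

lemma AA_pos {p : ℕ → ℝ} (hp_pos : ∀ k, 0 < p k) (hsum : Summable p) {x : ℝ}
    (hx : 1 / p 0 ≤ x) : 0 < AA p x :=
  lt_of_lt_of_le one_pos (AA_one_le hp_pos hsum hx)

lemma AA_ratio {p : ℕ → ℝ} (hp_pos : ∀ k, 0 < p k) (hsum : Summable p)
    {θ : ℝ} (hθ : θ ∈ Set.Ioo (0:ℝ) 1) {L : ℝ → ℝ}
    (hL : ∀ c > (0:ℝ), Tendsto (fun x => L (c * x) / L x) atTop (𝓝 1))
    (hα : ∀ x > (0:ℝ), AA p x = x ^ θ * L x)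
    {c : ℝ} (hc : 0 < c) :
    Tendsto (fun x => AA p (c * x) / AA p x) atTop (𝓝 (c ^ θ)) := by
  have h1 : Tendsto (fun x => c ^ θ * (L (c * x) / L x)) atTop (𝓝 (c ^ θ)) := by
    have := (hL c hc).const_mul (c ^ θ)
    simpa using this
  apply Tendsto.congr' _ h1
  filter_upwards [eventually_ge_atTop (max 1 (1 / p 0))] with x hx
  have hx1 : (1:ℝ) ≤ x := le_trans (le_max_left _ _) hx
  have hx0 : 0 < x := lt_of_lt_of_le one_pos hx1
  have hxp : 1 / p 0 ≤ x := le_trans (le_max_right _ _) hx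
  have hAAx : 0 < AA p x := AA_pos hp_pos hsum hxp
  have hLx : 0 < L x := by
    have h := hα x hx0
    rw [h] at hAAx
    have hxθ : 0 < x ^ θ := Real.rpow_pos_of_pos hx0 θ
    by_contra hcon
    push_neg at hcon
    nlinarith
  rw [hα x hx0, hα (c * x) (by positivity), Real.mul_rpow hc.le hx0.le]
  have hxθ : (0:ℝ) < x ^ θ := Real.rpow_pos_of_pos hx0 θ
  field_simp

lemma AA_potter {p : ℕ → ℝ} (hp_pos : ∀ k, 0 < p k) (hsum : Summable p)
    {θ : ℝ} (hθ : θ ∈ Set.Ioo (0:ℝ) 1) {L : ℝ → ℝ}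
    (hL : ∀ c > (0:ℝ), Tendsto (fun x => L (c * x) / L x) atTop (𝓝 1))
    (hα : ∀ x > (0:ℝ), AA p x = x ^ θ * L x) :
    ∃ s₀ : ℝ, 1 ≤ s₀ ∧ 1 / p 0 ≤ s₀ ∧ ∀ s, s₀ ≤ s → ∀ u : ℝ, 0 < u → u ≤ 1 →
      AA p (s / u) ≤ (2:ℝ) ^ ((1+θ)/2) * u ^ (-((1+θ)/2)) * AA p s := by
  set γ : ℝ := (1+θ)/2 with hγdef
  have hθ0 := hθ.1
  have hθ1 := hθ.2
  have hγθ : θ < γ := by rw [hγdef]; linarith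
  have hγ0 : 0 < γ := by rw [hγdef]; linarith
  have hγlt : (2:ℝ) ^ θ < 2 ^ γ := Real.rpow_lt_rpow_left_iff (by norm_num) |>.2 hγθ
  have h2γ1 : (1:ℝ) ≤ 2 ^ γ := Real.one_le_rpow (by norm_num) hγ0.le
  -- eventual doubling bound
  have h2 : ∀ᶠ x in atTop, AA p (2 * x) ≤ 2 ^ γ * AA p x := by
    have hr := AA_ratio hp_pos hsum hθ hL hα (c := 2) (by norm_num)
    have hev := hr.eventually_lt_const hγlt
    filter_upwards [hev, eventually_ge_atTop (1 / p 0)] with x h1 h2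
    have hAAx : 0 < AA p x := AA_pos hp_pos hsum h2
    calc AA p (2 * x) = (AA p (2 * x) / AA p x) * AA p x := by field_simp
    _ ≤ 2 ^ γ * AA p x := by
        apply mul_le_mul_of_nonneg_right h1.le hAAx.le
  rcases eventually_atTop.1 h2 with ⟨s₁, hs₁⟩
  set s₀ : ℝ := max (max 1 (1 / p 0)) s₁ with hs₀def
  have hs₀1 : (1:ℝ) ≤ s₀ := le_trans (le_max_left _ _) (le_max_left _ _)
  have hs₀p : 1 / p 0 ≤ s₀ := le_trans (le_max_right 1 _) (le_max_left _ _)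
  have hs₀s₁ : s₁ ≤ s₀ := le_max_right _ _
  -- induction claim
  have claim : ∀ k : ℕ, ∀ s : ℝ, s₀ ≤ s → ∀ u : ℝ, (2:ℝ) ^ (-(k:ℝ)) ≤ u →
      AA p (s / u) ≤ ((2:ℝ) ^ γ) ^ k * AA p s := by
    intro k
    induction k with
    | zero =>
      intro s hs u hu
      simp only [Nat.cast_zero, neg_zero, Real.rpow_zero] at hu
      simp only [pow_zero, one_mul]
      apply AA_mono hp_pos hsum
      have hs0 : 0 < s := lt_of_lt_of_le (lt_of_lt_of_le one_pos hs₀1) hs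
      exact div_le_self hs0.le hu
    | succ k ih =>
      intro s hs u hu
      have hs0 : 0 < s := lt_of_lt_of_le (lt_of_lt_of_le one_pos hs₀1) hs
      rcases le_or_gt ((2:ℝ) ^ (-(k:ℝ))) u with h | h
      · calc AA p (s / u) ≤ ((2:ℝ) ^ γ) ^ k * AA p s := ih s hs u h
        _ ≤ ((2:ℝ) ^ γ) ^ (k+1) * AA p s := by
            apply mul_le_mul_of_nonneg_right _ (AA_nonneg p s)
            exact pow_le_pow_right₀ h2γ1 (Nat.le_succ k)
      · have hu0 : 0 < u := lt_of_lt_of_le (by positivity) hu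
        have h2u : (2:ℝ) ^ (-(k:ℝ)) ≤ 2 * u := by
          have : (2:ℝ) ^ (-((k:ℝ)+1)) = 2 ^ (-(k:ℝ)) / 2 := by
            rw [Real.rpow_neg (by norm_num), Real.rpow_neg (by norm_num)]
            rw [Real.rpow_add (by norm_num) (k:ℝ) 1, Real.rpow_one]
            field_simp
          push_cast at hu
          rw [this] at hu
          linarith
        have hdiv : s / u = (2 * s) / (2 * u) := by
          field_simp
        have h2s : s₀ ≤ 2 * s := by linarith
        calc AA p (s / u) = AA p ((2*s) / (2*u)) := by rw [hdiv]
        _ ≤ ((2:ℝ) ^ γ) ^ k * AA p (2 * s) := ih (2*s) h2s (2*u) h2u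
        _ ≤ ((2:ℝ) ^ γ) ^ k * (2 ^ γ * AA p s) := by
            apply mul_le_mul_of_nonneg_left (hs₁ s (le_trans hs₀s₁ hs)) (by positivity)
        _ = ((2:ℝ) ^ γ) ^ (k+1) * AA p s := by ring
  refine ⟨s₀, hs₀1, hs₀p, fun s hs u hu0 hu1 => ?_⟩
  set k : ℕ := ⌈Real.logb 2 (1/u)⌉₊ with hkdef
  have hlogb0 : 0 ≤ Real.logb 2 (1/u) := by
    apply Real.logb_nonneg (by norm_num)
    rw [le_div_iff₀ hu0]; linarith
  have hk1 : (2:ℝ) ^ (-(k:ℝ)) ≤ u := by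
    rw [Real.rpow_neg (by norm_num), inv_le_comm₀ (by positivity) hu0]
    have h1 : (1:ℝ)/u = 2 ^ Real.logb 2 (1/u) := (Real.rpow_logb (by norm_num) (by norm_num) (by positivity)).symm
    rw [inv_eq_one_div, h1]
    exact Real.rpow_le_rpow_left_iff (by norm_num) |>.2 (Nat.le_ceil _)
  have hkb : (k:ℝ) ≤ Real.logb 2 (1/u) + 1 := by
    have := Nat.ceil_lt_add_one hlogb0
    exact this.le
  have hpow : ((2:ℝ) ^ γ) ^ k ≤ 2 ^ γ * u ^ (-γ) := by
    have e1 : ((2:ℝ) ^ γ) ^ k = 2 ^ (γ * k) := by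
      rw [← Real.rpow_natCast ((2:ℝ)^γ) k, ← Real.rpow_mul (by norm_num)]
    rw [e1]
    have e2 : γ * k ≤ γ * (Real.logb 2 (1/u) + 1) := by
      apply mul_le_mul_of_nonneg_left hkb hγ0.le
    calc (2:ℝ) ^ (γ * (k:ℝ)) ≤ 2 ^ (γ * (Real.logb 2 (1/u) + 1)) :=
          Real.rpow_le_rpow_left_iff (by norm_num) |>.2 e2
    _ = 2 ^ γ * u ^ (-γ) := by
        rw [mul_add, mul_one, Real.rpow_add (by norm_num), mul_comm γ (Real.logb 2 (1/u)),
          Real.rpow_mul (by norm_num), Real.rpow_logb (by norm_num) (by norm_num) (by positivity),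
          Real.rpow_neg hu0.le, one_div, Real.inv_rpow hu0.le]
        ring
  have hAAs : 0 ≤ AA p s := le_of_lt (AA_pos hp_pos hsum (le_trans hs₀p hs))
  calc AA p (s / u) ≤ ((2:ℝ) ^ γ) ^ k * AA p s := claim k s hs u hk1
  _ ≤ 2 ^ γ * u ^ (-γ) * AA p s := mul_le_mul_of_nonneg_right hpow hAAs

lemma integral_exp_neg_Ioo {c : ℝ} (hc : 0 < c) :
    ∫ u in Set.Ioo (0:ℝ) c, Real.exp (-u) = 1 - Real.exp (-c) := by
  rw [← MeasureTheory.integral_Ioc_eq_integral_Ioo, ← intervalIntegral.integral_of_le hc.le]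
  rw [intervalIntegral.integral_comp_neg (fun x => Real.exp x), integral_exp]
  simp

lemma phi_eq_integral {p : ℕ → ℝ} (hp_pos : ∀ k, 0 < p k) (hsum : Summable p)
    {s : ℝ} (hs : 0 < s) :
    Phi p s = ∫ u in Set.Ioi (0:ℝ), Real.exp (-u) * AA p (s/u) := by
  set F : ℕ → ℝ → ℝ := fun k u => Set.indicator (Set.Iio (p k * s)) (fun u => Real.exp (-u)) u
    with hF
  -- step 1
  have step1 : ∀ k, ∫ u in Set.Ioi (0:ℝ), F k u = 1 - Real.exp (-(p k * s)) := by
    intro k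
    have hc : 0 < p k * s := mul_pos (hp_pos k) hs
    rw [hF]
    simp only
    rw [MeasureTheory.integral_indicator measurableSet_Iio,
      MeasureTheory.Measure.restrict_restrict measurableSet_Iio, Set.Iio_inter_Ioi]
    exact integral_exp_neg_Ioo hc
  -- measurability
  have hmeas : ∀ k, AEStronglyMeasurable (F k) (volume.restrict (Set.Ioi (0:ℝ))) := by
    intro k
    exact ((continuous_exp.comp continuous_neg).aestronglyMeasurable).indicator measurableSet_Iio
  -- lintegral bound
  have hlint : ∑' k, ∫⁻ u in Set.Ioi (0:ℝ), ‖F k u‖₊ ≠ ⊤ := by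
    have hbd : ∀ k, ∫⁻ u in Set.Ioi (0:ℝ), ‖F k u‖₊ ≤ ENNReal.ofReal (p k * s) := by
      intro k
      have h1 : ∀ u, (‖F k u‖₊ : ℝ≥0∞) =
          Set.indicator (Set.Iio (p k * s)) (fun u => (‖Real.exp (-u)‖₊ : ℝ≥0∞)) u := by
        intro u
        rw [hF]
        simp only
        rw [nnnorm_indicator_eq_indicator_nnnorm]
        by_cases h : u ∈ Set.Iio (p k * s) <;> simp [h]
      calc ∫⁻ u in Set.Ioi (0:ℝ), ‖F k u‖₊
          = ∫⁻ u in Set.Ioi (0:ℝ), Set.indicator (Set.Iio (p k * s))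
              (fun u => (‖Real.exp (-u)‖₊ : ℝ≥0∞)) u := by
            exact lintegral_congr fun u => h1 u
        _ = ∫⁻ u in Set.Ioo 0 (p k * s), (‖Real.exp (-u)‖₊ : ℝ≥0∞) := by
            rw [MeasureTheory.lintegral_indicator measurableSet_Iio,
              MeasureTheory.Measure.restrict_restrict measurableSet_Iio, Set.Iio_inter_Ioi]
        _ ≤ ∫⁻ _ in Set.Ioo 0 (p k * s), 1 := by
            apply lintegral_mono_ae
            rw [ae_restrict_iff' measurableSet_Ioo]
            filter_upwards with u hu
            have h1 : Real.exp (-u) ≤ 1 := Real.exp_le_one_iff.2 (by linarith [hu.1])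
            have h2 : ‖Real.exp (-u)‖ ≤ 1 := by
              rw [Real.norm_eq_abs, abs_of_pos (Real.exp_pos _)]; exact h1
            simp only [ENNReal.coe_le_one_iff]
            exact_mod_cast h2
        _ = volume (Set.Ioo (0:ℝ) (p k * s)) := setLIntegral_one _
        _ = ENNReal.ofReal (p k * s) := by rw [Real.volume_Ioo, sub_zero]
    apply ne_top_of_le_ne_top _ (ENNReal.tsum_le_tsum hbd)
    rw [← ENNReal.ofReal_tsum_of_nonneg (fun k => (mul_pos (hp_pos k) hs).le)
      (hsum.mul_right s)]
    exact ENNReal.ofReal_ne_top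
  -- step 3 : a.e. pointwise sum
  have step3 : ∀ᵐ u ∂(volume.restrict (Set.Ioi (0:ℝ))),
      ∑' k, F k u = Real.exp (-u) * AA p (s/u) := by
    have hE : volume (Set.range (fun k => p k * s)) = 0 :=
      Set.Countable.measure_zero (Set.countable_range _) _
    have hae : ∀ᵐ u ∂(volume.restrict (Set.Ioi (0:ℝ))),
        u ∉ Set.range (fun k => p k * s) :=
      ae_restrict_of_ae (by
        rw [MeasureTheory.ae_iff]
        convert hE using 2
        ext u
        simp)
    filter_upwards [hae, ae_restrict_mem measurableSet_Ioi] with u hu hu0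
    have hu0' : (0:ℝ) < u := hu0
    -- the finite set
    have hset : {k : ℕ | u < p k * s} = {k : ℕ | p k ≥ 1 / (s/u)} := by
      ext k
      simp only [Set.mem_setOf_eq, ge_iff_le, one_div_div]
      constructor
      · intro h
        rw [div_le_iff₀ hs]
        linarith
      · intro h
        rw [div_le_iff₀ hs] at h
        rcases lt_or_eq_of_le h with h' | h'
        · exact h'
        · exact absurd ⟨k, h'.symm⟩ hu
    have hfin : {k : ℕ | u < p k * s}.Finite := by
      rw [hset]
      exact fin_ge hsum (by positivity)
    have hFval : ∀ k, F k u = if u < p k * s then Real.exp (-u) else 0 := by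
      intro k
      rw [hF]
      simp [Set.indicator_apply, Set.mem_Iio]
    rw [tsum_eq_sum (s := hfin.toFinset) (fun k hk => by
      rw [hFval k, if_neg (show ¬ (u < p k * s) from fun hlt => hk (hfin.mem_toFinset.2 hlt))])]
    have : ∀ k ∈ hfin.toFinset, F k u = Real.exp (-u) := by
      intro k hk
      rw [hFval k, if_pos (show u < p k * s from hfin.mem_toFinset.1 hk)]
    rw [Finset.sum_congr rfl this, Finset.sum_const, nsmul_eq_mul]
    rw [AA, ← hset, Set.ncard_eq_toFinset_card _ hfin]
    ring
  -- combine
  have hswap := MeasureTheory.integral_tsum hmeas hlint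
  rw [Phi]
  calc ∑' k, (1 - Real.exp (-(p k * s))) = ∑' k, ∫ u in Set.Ioi (0:ℝ), F k u := by
        exact tsum_congr fun k => (step1 k).symm
  _ = ∫ u in Set.Ioi (0:ℝ), ∑' k, F k u := hswap.symm
  _ = ∫ u in Set.Ioi (0:ℝ), Real.exp (-u) * AA p (s/u) := integral_congr_ae step3

lemma phi_div_AA_tendsto {p : ℕ → ℝ} (hp_pos : ∀ k, 0 < p k) (hsum : Summable p)
    {θ : ℝ} (hθ : θ ∈ Set.Ioo (0:ℝ) 1) {L : ℝ → ℝ}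
    (hL : ∀ c > (0:ℝ), Tendsto (fun x => L (c * x) / L x) atTop (𝓝 1))
    (hα : ∀ x > (0:ℝ), AA p x = x ^ θ * L x) :
    Tendsto (fun s => Phi p s / AA p s) atTop (𝓝 (Real.Gamma (1 - θ))) := by
  obtain ⟨hθ0, hθ1⟩ := hθ
  set γ : ℝ := (1+θ)/2 with hγdef
  have hγ0 : 0 < γ := by rw [hγdef]; linarith
  have hγ1 : γ < 1 := by rw [hγdef]; linarith
  obtain ⟨s₀, hs₀1, hs₀p, hpot⟩ := AA_potter hp_pos hsum ⟨hθ0, hθ1⟩ hL hα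
  set F : ℝ → ℝ → ℝ := fun s u => Real.exp (-u) * AA p (s/u) / AA p s with hFdef
  set bound : ℝ → ℝ := fun u => Real.exp (-u) * ((2:ℝ)^γ * u^(-γ) + 1) with hbdef
  have hmono := AA_mono hp_pos hsum
  -- dominated convergence
  have hmain : Tendsto (fun s => ∫ u in Set.Ioi (0:ℝ), F s u) atTop
      (𝓝 (∫ u in Set.Ioi (0:ℝ), Real.exp (-u) * u ^ (-θ))) := by
    apply MeasureTheory.tendsto_integral_filter_of_dominated_convergence bound
    · -- measurability
      apply Filter.Eventually.of_forall
      intro s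
      have hm : Measurable (fun u : ℝ => AA p (s/u)) :=
        hmono.measurable.comp (measurable_const.div measurable_id)
      exact (((continuous_exp.comp continuous_neg).measurable.mul hm).div_const
        (AA p s)).aestronglyMeasurable
    · -- bound
      filter_upwards [eventually_ge_atTop s₀] with s hs
      rw [ae_restrict_iff' measurableSet_Ioi]
      apply Filter.Eventually.of_forall
      intro u hu
      have hu0 : (0:ℝ) < u := hu
      have hAAs : 0 < AA p s := AA_pos hp_pos hsum (le_trans hs₀p hs)
      have hs0 : (0:ℝ) < s := lt_of_lt_of_le (lt_of_lt_of_le one_pos hs₀1) hs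
      have hF0 : 0 ≤ F s u := by
        rw [hFdef]
        have := AA_nonneg p (s/u)
        positivity
      rw [Real.norm_eq_abs, abs_of_nonneg hF0]
      rcases le_or_gt u 1 with hu1 | hu1
      · have hb := hpot s hs u hu0 hu1
        rw [hFdef, hbdef]
        simp only
        rw [div_le_iff₀ hAAs]
        calc Real.exp (-u) * AA p (s/u) ≤ Real.exp (-u) * ((2:ℝ)^γ * u^(-γ) * AA p s) := by
              apply mul_le_mul_of_nonneg_left hb (Real.exp_pos _).le
        _ ≤ Real.exp (-u) * ((2:ℝ)^γ * u^(-γ) + 1) * AA p s := by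
            have h1 : (0:ℝ) ≤ Real.exp (-u) := (Real.exp_pos _).le
            have h2 : (0:ℝ) ≤ (2:ℝ)^γ * u^(-γ) := by positivity
            nlinarith [hAAs.le]
      · have hb : AA p (s/u) ≤ AA p s := hmono (div_le_self hs0.le hu1.le)
        rw [hFdef, hbdef]
        simp only
        rw [div_le_iff₀ hAAs]
        have h2 : (0:ℝ) ≤ (2:ℝ)^γ * u^(-γ) := by positivity
        have h3 : (0:ℝ) < Real.exp (-u) := Real.exp_pos _
        nlinarith [mul_le_mul_of_nonneg_left hb h3.le,
          mul_nonneg h3.le (mul_nonneg h2 hAAs.le)]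
    · -- integrability of bound
      have h1γ : (0:ℝ) < 1 - γ := by linarith
      have hint1 : IntegrableOn (fun u : ℝ => Real.exp (-u) * u ^ (-γ)) (Set.Ioi 0) := by
        have := Real.GammaIntegral_convergent h1γ
        have he : (1:ℝ) - γ - 1 = -γ := by ring
        rwa [he] at this
      have hint2 : IntegrableOn (fun u : ℝ => Real.exp (-u)) (Set.Ioi 0) := by
        have := exp_neg_integrableOn_Ioi 0 (b := 1) one_pos
        simpa using this
      have : IntegrableOn (fun u : ℝ => (2:ℝ)^γ * (Real.exp (-u) * u ^ (-γ)) + Real.exp (-u))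
          (Set.Ioi 0) := (hint1.const_mul _).add hint2
      apply this.congr_fun _ measurableSet_Ioi
      intro u _
      rw [hbdef]
      ring
    · -- pointwise limit
      rw [ae_restrict_iff' measurableSet_Ioi]
      apply Filter.Eventually.of_forall
      intro u hu
      have hu0 : (0:ℝ) < u := hu
      have hr := AA_ratio hp_pos hsum ⟨hθ0, hθ1⟩ hL hα (c := 1/u) (by positivity)
      have hr' : Tendsto (fun s => AA p (s/u) / AA p s) atTop (𝓝 ((1/u) ^ θ)) := by
        apply hr.congr
        intro s
        rw [one_div, inv_mul_eq_div]
      have := hr'.const_mul (Real.exp (-u))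
      have heq : Real.exp (-u) * (1/u) ^ θ = Real.exp (-u) * u ^ (-θ) := by
        rw [one_div, Real.inv_rpow hu0.le, ← Real.rpow_neg hu0.le]
      rw [heq] at this
      apply this.congr
      intro s
      rw [hFdef]
      simp only
      rw [mul_div_assoc]
  -- identify the limit with Gamma
  have hGamma : ∫ u in Set.Ioi (0:ℝ), Real.exp (-u) * u ^ (-θ) = Real.Gamma (1 - θ) := by
    have he : (1:ℝ) - θ - 1 = -θ := by ring
    rw [Real.Gamma_eq_integral (by linarith : (0:ℝ) < 1 - θ), he]
  rw [hGamma] at hmain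
  apply hmain.congr'
  filter_upwards [eventually_ge_atTop s₀] with s hs
  have hs0 : (0:ℝ) < s := lt_of_lt_of_le (lt_of_lt_of_le one_pos hs₀1) hs
  rw [phi_eq_integral hp_pos hsum hs0, ← integral_div]

lemma keyc {p : ℕ → ℝ} (hp_pos : ∀ k, 0 < p k) (hsum : Summable p)
    {θ : ℝ} (hθ : θ ∈ Set.Ioo (0:ℝ) 1) {L : ℝ → ℝ}
    (hL : ∀ c > (0:ℝ), Tendsto (fun x => L (c * x) / L x) atTop (𝓝 1))
    (hα : ∀ x > (0:ℝ), AA p x = x ^ θ * L x) {c : ℝ} (hc : 0 < c) :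
    Tendsto (fun n : ℕ => Phi p ((n:ℝ) * c) / AA p (n:ℝ)) atTop
      (𝓝 (Real.Gamma (1 - θ) * c ^ θ)) := by
  have h1 : Tendsto (fun n : ℕ => (n:ℝ) * c) atTop atTop :=
    tendsto_natCast_atTop_atTop.atTop_mul_const hc
  have h2 := (phi_div_AA_tendsto hp_pos hsum hθ hL hα).comp h1
  have h3 := (AA_ratio hp_pos hsum hθ hL hα hc).comp
    (tendsto_natCast_atTop_atTop (R := ℝ))
  have h4 := h2.mul h3
  apply h4.congr'
  filter_upwards [h1.eventually_ge_atTop (1 / p 0)] with n hn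
  have hA : 0 < AA p ((n:ℝ) * c) := AA_pos hp_pos hsum hn
  simp only [Function.comp]
  rw [mul_comm c (n:ℝ)]
  field_simp

lemma key_lemma {p : ℕ → ℝ} (hp_pos : ∀ k, 0 < p k) (hsum : Summable p)
    {θ : ℝ} (hθ : θ ∈ Set.Ioo (0:ℝ) 1) {L : ℝ → ℝ}
    (hL : ∀ c > (0:ℝ), Tendsto (fun x => L (c * x) / L x) atTop (𝓝 1))
    (hα : ∀ x > (0:ℝ), AA p x = x ^ θ * L x) {a b : ℝ} (ha : 0 < a) (hab : a < b) :
    Tendsto (fun n : ℕ => (1 / AA p (n:ℝ)) * ((1 / 2) *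
        ∑' k, (Real.exp (-(p k * (n:ℝ) * a)) - Real.exp (-(p k * (n:ℝ) * b)))))
      atTop (𝓝 (Real.Gamma (1 - θ) * (b ^ θ - a ^ θ) / 2)) := by
  have hb : 0 < b := lt_trans ha hab
  have hsummable : ∀ s : ℝ, 0 ≤ s → Summable (fun k => 1 - Real.exp (-(p k * s))) := by
    intro s hs
    apply Summable.of_nonneg_of_le _ _ (hsum.mul_right s)
    · intro k
      have : Real.exp (-(p k * s)) ≤ 1 :=
        Real.exp_le_one_iff.2 (by nlinarith [(hp_pos k).le])
      linarith
    · intro k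
      have h1 : 1 - (p k * s) ≤ Real.exp (-(p k * s)) := by
        have := Real.add_one_le_exp (-(p k * s))
        linarith
      linarith
  have htsum : ∀ n : ℕ,
      ∑' k, (Real.exp (-(p k * (n:ℝ) * a)) - Real.exp (-(p k * (n:ℝ) * b)))
        = Phi p ((n:ℝ) * b) - Phi p ((n:ℝ) * a) := by
    intro n
    have hn0 : (0:ℝ) ≤ (n:ℝ) := Nat.cast_nonneg n
    have hsa := hsummable ((n:ℝ) * a) (by positivity)
    have hsb := hsummable ((n:ℝ) * b) (by positivity)
    rw [Phi, Phi, ← Summable.tsum_sub hsb hsa]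
    apply tsum_congr
    intro k
    rw [mul_assoc (p k) (n:ℝ) a, mul_assoc (p k) (n:ℝ) b]
    ring
  have h1 := ((keyc hp_pos hsum hθ hL hα hb).sub (keyc hp_pos hsum hθ hL hα ha)).const_mul
    ((1:ℝ)/2)
  have h2 : (1:ℝ)/2 * (Real.Gamma (1-θ) * b ^ θ - Real.Gamma (1-θ) * a ^ θ)
      = Real.Gamma (1 - θ) * (b ^ θ - a ^ θ) / 2 := by ring
  rw [h2] at h1
  apply h1.congr
  intro n
  rw [htsum n]
  ring

/-- Limit cross-covariances of the occupancy and odd-occupancy processes, `θ ∈ (0,1)`: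
for `0 < τ ≤ t`,
`(1/α(n)) (1/2) ∑_k (e^{−p_k n(2t−τ)} − e^{−p_k n(2t+τ)}) → Γ(1−θ)((2t+τ)^θ−(2t−τ)^θ)/2`
and
`(1/α(n)) (1/2) ∑_k (e^{−p_k n t} − e^{−p_k n(t+2τ)}) → Γ(1−θ)((t+2τ)^θ−t^θ)/2`. -/
theorem limit_covariance_occupancy_odd_occupancy
    (p : ℕ → ℝ) (hp_pos : ∀ k, 0 < p k) (hp_mono : Antitone p)
    (hp_sum : ∑' k, p k = 1)
    (θ : ℝ) (hθ : θ ∈ Set.Ioo (0 : ℝ) 1)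
    (L : ℝ → ℝ)
    (hL : ∀ c > (0 : ℝ), Tendsto (fun x => L (c * x) / L x) atTop (𝓝 1))
    (hα : ∀ x > (0 : ℝ), ((Set.ncard {i : ℕ | p i ≥ 1 / x} : ℝ)) = x ^ θ * L x)
    (τ t : ℝ) (hτ : 0 < τ) (hτt : τ ≤ t) :
    Tendsto (fun n : ℕ =>
        (1 / ((Set.ncard {i : ℕ | p i ≥ 1 / (n : ℝ)} : ℝ))) * ((1 / 2) *
          ∑' k, (Real.exp (-(p k * (n : ℝ) * (2 * t - τ)))
            - Real.exp (-(p k * (n : ℝ) * (2 * t + τ))))))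
      atTop
      (𝓝 (Real.Gamma (1 - θ) * ((2 * t + τ) ^ θ - (2 * t - τ) ^ θ) / 2)) ∧
    Tendsto (fun n : ℕ =>
        (1 / ((Set.ncard {i : ℕ | p i ≥ 1 / (n : ℝ)} : ℝ))) * ((1 / 2) *
          ∑' k, (Real.exp (-(p k * (n : ℝ) * t))
            - Real.exp (-(p k * (n : ℝ) * (t + 2 * τ))))))
      atTop
      (𝓝 (Real.Gamma (1 - θ) * ((t + 2 * τ) ^ θ - t ^ θ) / 2)) := by
  have hsum : Summable p := by
    by_contra h
    rw [tsum_eq_zero_of_not_summable h] at hp_sum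
    norm_num at hp_sum
  have hα' : ∀ x > (0:ℝ), AA p x = x ^ θ * L x := hα
  constructor
  · exact key_lemma hp_pos hsum hθ hL hα' (by linarith) (by linarith)
  · exact key_lemma hp_pos hsum hθ hL hα' (by linarith) (by linarith)
end

section
/- For all fixed reals 0 < τ ≤ t, lim_{n→∞} (1/α(n)) Σ_{k≥1} n t p_k ( e^{−p_k n (t + τ)} − e^{−p_k n t} ) = θ Γ(1 − θ) ( t (t + τ)^{θ−1} − t^θ ), and lim_{n→∞} (1/α(n)) Σ_{k≥1} n τ p_k ( e^{−p_k n (t + τ)} − e^{−p_k n t} ) = θ Γ(1 − θ) ( τ (t + τ)^{θ−1} − τ t^{θ−1} ), where Γ is the Gamma function. -/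
open Filter Topology Real

open MeasureTheory Set ENNReal NNReal


lemma finite_of_summable {p : ℕ → ℝ} (hp : Summable p) {ε : ℝ} (hε : 0 < ε) :
    {i : ℕ | p i ≥ ε}.Finite := by
  have h := hp.tendsto_cofinite_zero
  have h2 : ∀ᶠ i in cofinite, p i ∈ Set.Iio ε := h (Iio_mem_nhds hε)
  have : {i : ℕ | p i ≥ ε} ⊆ {i : ℕ | ¬ p i < ε} := fun i hi => not_lt.2 hi
  exact Set.Finite.subset h2 this

lemma summable_of_tsum_one {p : ℕ → ℝ} (hp_pos : ∀ k, 0 < p k) (hp_sum : ∑' k, p k = 1) :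
    Summable p := by
  by_contra h
  rw [tsum_eq_zero_of_not_summable h] at hp_sum
  norm_num at hp_sum

noncomputable def Af (p : ℕ → ℝ) (x : ℝ) : ℝ := (Set.ncard {i : ℕ | p i ≥ 1/x} : ℝ)

lemma Af_zero_of_nonpos {p : ℕ → ℝ} (hp_pos : ∀ k, 0 < p k) {x : ℝ} (hx : x ≤ 0) :
    Af p x = 0 := by
  have : {i : ℕ | p i ≥ 1/x} = Set.univ := by
    ext i; simp only [Set.mem_setOf_eq, Set.mem_univ, iff_true]
    have h1 : 1/x ≤ 0 := div_nonpos_of_nonneg_of_nonpos zero_le_one hx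
    exact le_trans h1 (hp_pos i).le
  unfold Af
  rw [this, Set.Infinite.ncard (Set.infinite_univ)]
  simp

lemma Af_mono {p : ℕ → ℝ} (hp_pos : ∀ k, 0 < p k) (hp : Summable p) : Monotone (Af p) := by
  intro x y hxy
  rcases le_or_gt x 0 with hx | hx
  · rw [Af_zero_of_nonpos hp_pos hx]
    exact Nat.cast_nonneg _
  · have hy : 0 < y := lt_of_lt_of_le hx hxy
    have hfin : {i : ℕ | p i ≥ 1/y}.Finite := finite_of_summable hp (by positivity)
    have hsub : {i : ℕ | p i ≥ 1/x} ⊆ {i : ℕ | p i ≥ 1/y} := by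
      intro i hi
      exact le_trans (one_div_le_one_div_of_le hx hxy) hi
    unfold Af
    exact_mod_cast Set.ncard_le_ncard hsub hfin

lemma ncard_eq_tsum {S : Set ℕ} (hS : S.Finite) [DecidablePred (· ∈ S)] :
    (S.ncard : ℝ) = ∑' k, if k ∈ S then (1:ℝ) else 0 := by
  rw [tsum_eq_sum (s := hS.toFinset) (by intro k hk; simp [Set.Finite.mem_toFinset] at hk ⊢; exact hk)]
  have : ∑ b ∈ hS.toFinset, (if b ∈ S then (1:ℝ) else 0) = ∑ b ∈ hS.toFinset, (1:ℝ) := by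
    apply Finset.sum_congr rfl
    intro b hb
    simp [Set.Finite.mem_toFinset] at hb
    simp [hb]
  rw [this, Finset.sum_const, nsmul_eq_mul, mul_one, Set.ncard_eq_toFinset_card _ hS]

lemma Af_pos {p : ℕ → ℝ} (hp_pos : ∀ k, 0 < p k) (hp : Summable p) {s : ℝ}
    (hs : 1 / p 0 ≤ s) : 1 ≤ Af p s := by
  have hs0 : 0 < s := lt_of_lt_of_le (by have := hp_pos 0; positivity) hs
  have h0 : (0:ℕ) ∈ {i : ℕ | p i ≥ 1/s} := by
    simp only [Set.mem_setOf_eq]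
    rw [ge_iff_le, div_le_iff₀ hs0]
    rw [div_le_iff₀ (hp_pos 0)] at hs
    linarith [hs]
  have hfin : {i : ℕ | p i ≥ 1/s}.Finite := finite_of_summable hp (by positivity)
  have : 1 ≤ {i : ℕ | p i ≥ 1/s}.ncard := by
    rw [Nat.one_le_iff_ne_zero, ← Nat.pos_iff_ne_zero, Set.ncard_pos hfin]
    exact ⟨0, h0⟩
  unfold Af
  exact_mod_cast this

lemma Af_tsum {p : ℕ → ℝ} (hp : Summable p) {s x : ℝ} (hs : 0 < s) (hx : 0 < x) :
    Af p (s / x) = ∑' k, if x ≤ s * p k then (1:ℝ) else 0 := by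
  classical
  have hset : {i : ℕ | p i ≥ 1/(s/x)} = {i : ℕ | x ≤ s * p i} := by
    ext i
    simp only [Set.mem_setOf_eq, ge_iff_le, one_div_div]
    rw [div_le_iff₀ hs, mul_comm]
  have hfin : {i : ℕ | x ≤ s * p i}.Finite := by
    have : {i : ℕ | x ≤ s * p i} = {i : ℕ | p i ≥ x / s} := by
      ext i
      simp only [Set.mem_setOf_eq, ge_iff_le, div_le_iff₀ hs, mul_comm]
    rw [this]
    exact finite_of_summable hp (by positivity)
  unfold Af
  rw [hset, ncard_eq_tsum hfin]
  rfl

lemma ftc_ue {u : ℝ} (hu : 0 ≤ u) :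
    ∫ x in (0:ℝ)..u, (1 - x) * Real.exp (-x) = u * Real.exp (-u) := by
  have h : ∀ x ∈ Set.uIcc (0:ℝ) u, HasDerivAt (fun y => y * Real.exp (-y))
      ((1 - x) * Real.exp (-x)) x := by
    intro x _
    have h1 : HasDerivAt (fun y : ℝ => Real.exp (-y)) (-Real.exp (-x)) x := by
      simpa [Function.comp_def] using (Real.hasDerivAt_exp (-x)).comp x (hasDerivAt_neg x)
    have := (hasDerivAt_id x).mul h1
    exact this.congr_deriv (by simp only [id]; ring)
  have hint : IntervalIntegrable (fun x => (1 - x) * Real.exp (-x)) volume 0 u :=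
    (Continuous.mul (by continuity) (by continuity)).intervalIntegrable 0 u
  have := intervalIntegral.integral_eq_sub_of_hasDerivAt h hint
  simpa using this

lemma abs_bound {x : ℝ} (hx : 0 ≤ x) : |(1 - x) * Real.exp (-x)| ≤ 1 := by
  rcases le_or_gt x 1 with h | h
  · rw [abs_mul, abs_of_nonneg (by linarith : (0:ℝ) ≤ 1 - x), abs_of_pos (Real.exp_pos _)]
    have h1 : Real.exp (-x) ≤ 1 := Real.exp_le_one_iff.2 (by linarith)
    nlinarith [Real.exp_pos (-x)]
  · rw [abs_mul, abs_of_neg (by linarith : (1:ℝ) - x < 0), abs_of_pos (Real.exp_pos _)]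
    have h1 : x - 1 ≤ Real.exp x := by
      have := Real.add_one_le_exp x
      linarith
    rw [Real.exp_neg, neg_sub]
    have h2 : 0 < Real.exp x := Real.exp_pos x
    rw [← div_eq_mul_inv, div_le_one h2]
    linarith

lemma repr_integral {p : ℕ → ℝ} (hp_pos : ∀ k, 0 < p k) (hp : Summable p) {s : ℝ} (hs : 0 < s) :
    ∫ x in Set.Ioi (0:ℝ), (1 - x) * Real.exp (-x) * Af p (s / x)
      = ∑' k, s * p k * Real.exp (-(s * p k)) := by
  classical
  set g : ℝ → ℝ := fun x => (1 - x) * Real.exp (-x) with hg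
  set f : ℕ → ℝ → ℝ := fun k x => Set.indicator (Set.Iic (s * p k)) g x with hf
  have hmeas : ∀ k, AEStronglyMeasurable (f k) (volume.restrict (Set.Ioi (0:ℝ))) := by
    intro k
    exact (((continuous_const.sub continuous_id).mul (Real.continuous_exp.comp
      continuous_neg)).measurable.indicator measurableSet_Iic).aestronglyMeasurable
  have hbound : ∀ k, ∫⁻ x in Set.Ioi (0:ℝ), ‖f k x‖₊ ≤ ENNReal.ofReal (s * p k) := by
    intro k
    have h1 : ∫⁻ x in Set.Ioi (0:ℝ), ‖f k x‖₊
        ≤ ∫⁻ x in Set.Ioi (0:ℝ), Set.indicator (Set.Iic (s * p k)) (fun _ => (1:ℝ≥0∞)) x := by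
      apply setLIntegral_mono (by measurability)
      intro x hx
      simp only [hf, Set.indicator_apply]
      by_cases hxk : x ∈ Set.Iic (s * p k)
      · simp only [if_pos hxk]
        rw [show ((1:ℝ≥0∞)) = ((1:ℝ≥0) : ℝ≥0∞) by simp]
        rw [ENNReal.coe_le_coe]
        have : |g x| ≤ 1 := abs_bound (le_of_lt hx)
        rwa [← Real.norm_eq_abs, ← coe_nnnorm, NNReal.coe_le_one] at this
      · have hxk' : ¬ x ≤ s * p k := by simpa using hxk
        simp [hxk']
    have h2 : ∫⁻ x in Set.Ioi (0:ℝ), Set.indicator (Set.Iic (s * p k)) (fun _ => (1:ℝ≥0∞)) x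
        = ENNReal.ofReal (s * p k) := by
      rw [lintegral_indicator measurableSet_Iic]
      rw [Measure.restrict_restrict measurableSet_Iic]
      rw [setLIntegral_const]
      have : Set.Iic (s * p k) ∩ Set.Ioi (0:ℝ) = Set.Ioc 0 (s * p k) := by
        ext x; simp only [Set.mem_inter_iff, Set.mem_Iic, Set.mem_Ioi, Set.mem_Ioc]
        tauto
      rw [this, Real.volume_Ioc, one_mul]
      simp
    exact le_trans h1 (le_of_eq h2)
  have hne : ∑' k, ∫⁻ x in Set.Ioi (0:ℝ), ‖f k x‖₊ ≠ ⊤ := by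
    have hle : ∑' k, ∫⁻ x in Set.Ioi (0:ℝ), ‖f k x‖₊ ≤ ∑' k, ENNReal.ofReal (s * p k) :=
      ENNReal.tsum_le_tsum hbound
    have h3 : ∑' k, ENNReal.ofReal (s * p k) = ENNReal.ofReal (∑' k, s * p k) :=
      (ENNReal.ofReal_tsum_of_nonneg (fun k => by have := hp_pos k; positivity)
        (hp.mul_left s)).symm
    exact (lt_of_le_of_lt hle (h3 ▸ ENNReal.ofReal_lt_top)).ne
  have key : ∀ x ∈ Set.Ioi (0:ℝ), (1 - x) * Real.exp (-x) * Af p (s / x) = ∑' k, f k x := by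
    intro x hx
    rw [Af_tsum hp hs hx]
    calc (1 - x) * Real.exp (-x) * ∑' (k:ℕ), (if x ≤ s * p k then (1:ℝ) else 0)
        = ∑' (k:ℕ), (1 - x) * Real.exp (-x) * (if x ≤ s * p k then (1:ℝ) else 0) :=
          tsum_mul_left.symm
      _ = ∑' k, f k x := by
          apply tsum_congr
          intro k
          by_cases hc : x ≤ s * p k
          · simp [hf, hg, Set.indicator_apply, Set.mem_Iic, hc]
          · simp [hf, hg, Set.indicator_apply, Set.mem_Iic, hc]
  rw [setIntegral_congr_fun measurableSet_Ioi key, integral_tsum hmeas hne]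
  apply tsum_congr
  intro k
  have hu : 0 ≤ s * p k := le_of_lt (by have := hp_pos k; positivity)
  have : ∫ x in Set.Ioi (0:ℝ), f k x = ∫ x in Set.Ioc (0:ℝ) (s * p k), g x := by
    have hseteq : Set.Iic (s * p k) ∩ Set.Ioi (0:ℝ) = Set.Ioc 0 (s * p k) := by
      ext x
      simp only [Set.mem_inter_iff, Set.mem_Iic, Set.mem_Ioi, Set.mem_Ioc]
      tauto
    rw [hf, integral_indicator measurableSet_Iic,
      Measure.restrict_restrict measurableSet_Iic, hseteq]
  rw [this, ← intervalIntegral.integral_of_le hu]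
  exact ftc_ue hu

section Main
variable {p : ℕ → ℝ} {θ : ℝ} {L : ℝ → ℝ}

lemma Af_ratio (hp_pos : ∀ k, 0 < p k) (hp : Summable p)
    (hθ : θ ∈ Set.Ioo (0 : ℝ) 1)
    (hL : ∀ c > (0 : ℝ), Tendsto (fun x => L (c * x) / L x) atTop (𝓝 1))
    (hα : ∀ x > (0 : ℝ), Af p x = x ^ θ * L x)
    {c : ℝ} (hc : 0 < c) :
    Tendsto (fun s => Af p (c * s) / Af p s) atTop (𝓝 (c ^ θ)) := by
  have h1 : Tendsto (fun s => c ^ θ * (L (c * s) / L s)) atTop (𝓝 (c ^ θ * 1)) :=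
    (hL c hc).const_mul _
  rw [mul_one] at h1
  apply h1.congr'
  filter_upwards [eventually_ge_atTop (max 1 (1 / p 0))] with s hs
  have hs1 : (1:ℝ) ≤ s := le_trans (le_max_left _ _) hs
  have hs0 : 0 < s := lt_of_lt_of_le one_pos hs1
  have hApos : 1 ≤ Af p s := Af_pos hp_pos hp (le_trans (le_max_right _ _) hs)
  have hAeq : Af p s = s ^ θ * L s := hα s hs0
  have hsθ : (0:ℝ) < s ^ θ := Real.rpow_pos_of_pos hs0 θ
  have hLne : L s ≠ 0 := by
    intro h
    rw [hAeq, h, mul_zero] at hApos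
    linarith
  have hAceq : Af p (c * s) = c ^ θ * s ^ θ * L (c * s) := by
    rw [hα (c * s) (by positivity), Real.mul_rpow hc.le hs0.le]
  rw [hAceq, hAeq]
  field_simp

lemma Gf_summable (hp_pos : ∀ k, 0 < p k) (hp : Summable p) {s : ℝ} (hs : 0 ≤ s) :
    Summable (fun k => p k * Real.exp (-(p k * s))) := by
  apply Summable.of_nonneg_of_le (fun k => by have := hp_pos k; positivity) _ hp
  intro k
  have h1 : Real.exp (-(p k * s)) ≤ 1 :=
    Real.exp_le_one_iff.2 (by have := (hp_pos k).le; simp; positivity)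
  have := (hp_pos k).le
  nlinarith

lemma potter (hp_pos : ∀ k, 0 < p k) (hp : Summable p)
    (hθ : θ ∈ Set.Ioo (0 : ℝ) 1)
    (hL : ∀ c > (0 : ℝ), Tendsto (fun x => L (c * x) / L x) atTop (𝓝 1))
    (hα : ∀ x > (0 : ℝ), Af p x = x ^ θ * L x) :
    ∃ S : ℝ, 1 ≤ S ∧ ∀ s, S ≤ s → ∀ x : ℝ, 0 < x → x ≤ 1 →
      Af p (s / x) ≤ 2 * x ^ (-((1 + θ)/2)) * Af p s := by
  set θ' : ℝ := (1 + θ)/2 with hθ'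
  have hθ'1 : θ' < 1 := by simp [hθ']; linarith [hθ.2]
  have hθθ' : θ < θ' := by simp [hθ']; linarith [hθ.1]
  have h2 : Tendsto (fun s => Af p (2 * s) / Af p s) atTop (𝓝 ((2:ℝ) ^ θ)) :=
    Af_ratio hp_pos hp hθ hL hα two_pos
  have hlt : (2:ℝ) ^ θ < 2 ^ θ' := by
    rw [Real.rpow_lt_rpow_left_iff one_lt_two]
    exact hθθ'
  have hev : ∀ᶠ s in atTop, Af p (2 * s) / Af p s < 2 ^ θ' :=
    h2.eventually_lt_const hlt
  rw [eventually_atTop] at hev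
  obtain ⟨S₀, hS₀⟩ := hev
  refine ⟨max S₀ (max 1 (1 / p 0)), le_trans (le_max_left _ _) (le_max_right _ _), ?_⟩
  set S := max S₀ (max 1 (1 / p 0)) with hSdef
  have hstep : ∀ s, S ≤ s → Af p (2 * s) ≤ 2 ^ θ' * Af p s := by
    intro s hs
    have hpos : 0 < Af p s :=
      lt_of_lt_of_le one_pos (Af_pos hp_pos hp (le_trans (le_trans (le_max_right _ _) (le_max_right _ _)) hs))
    have := hS₀ s (le_trans (le_max_left _ _) hs)
    rw [div_lt_iff₀ hpos] at this
    linarith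
  have hiter : ∀ m : ℕ, ∀ s, S ≤ s → Af p (2 ^ m * s) ≤ (2:ℝ) ^ (θ' * m) * Af p s := by
    intro m
    induction m with
    | zero => intro s hs; simp
    | succ m ih =>
      intro s hs
      have hcast : ((m+1:ℕ):ℝ) = (m:ℝ)+1 := by push_cast; ring
      rw [hcast]
      have hs0 : (0:ℝ) < s :=
        lt_of_lt_of_le one_pos (le_trans (le_trans (le_max_left _ _) (le_max_right _ _)) hs)
      have h2s : S ≤ 2 * s := le_trans hs (by linarith)
      have e1 : (2:ℝ) ^ (m + 1) * s = 2 ^ m * (2 * s) := by ring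
      calc Af p (2 ^ (m+1) * s) = Af p (2 ^ m * (2 * s)) := by rw [e1]
        _ ≤ (2:ℝ) ^ (θ' * m) * Af p (2 * s) := ih (2 * s) h2s
        _ ≤ (2:ℝ) ^ (θ' * m) * (2 ^ θ' * Af p s) := by
            apply mul_le_mul_of_nonneg_left (hstep s hs)
            positivity
        _ = (2:ℝ) ^ (θ' * (m + 1)) * Af p s := by
            rw [show θ' * ((m:ℝ) + 1) = θ' * m + θ' by ring, Real.rpow_add two_pos]
            ring
  intro s hs x hx hx1
  have hs1 : (1:ℝ) ≤ s := le_trans (le_trans (le_max_left _ _) (le_max_right _ _)) hs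
  have hs0 : (0:ℝ) < s := lt_of_lt_of_le one_pos hs1
  set m : ℕ := ⌈Real.logb 2 (1/x)⌉₊ with hm
  have hinvx1 : (1:ℝ) ≤ 1/x := by
    rw [le_div_iff₀ hx]; linarith
  have hlogb0 : 0 ≤ Real.logb 2 (1/x) := Real.logb_nonneg one_lt_two hinvx1
  have hm1 : 1/x ≤ (2:ℝ) ^ (m:ℝ) := by
    calc 1/x = (2:ℝ) ^ (Real.logb 2 (1/x)) :=
          (Real.rpow_logb two_pos (by norm_num) (by positivity)).symm
      _ ≤ (2:ℝ) ^ (m:ℝ) := by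
          apply Real.rpow_le_rpow_of_exponent_le one_le_two
          exact Nat.le_ceil _
  have hm2 : (m:ℝ) ≤ Real.logb 2 (1/x) + 1 := le_of_lt (Nat.ceil_lt_add_one hlogb0)
  have hm3 : (2:ℝ) ^ (m:ℝ) ≤ 2 * (1/x) := by
    calc (2:ℝ) ^ (m:ℝ) ≤ (2:ℝ) ^ (Real.logb 2 (1/x) + 1) :=
          Real.rpow_le_rpow_of_exponent_le one_le_two hm2
      _ = 2 * (1/x) := by
          rw [Real.rpow_add two_pos, Real.rpow_logb two_pos (by norm_num) (by positivity),
            Real.rpow_one]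
          ring
  have hmono := Af_mono hp_pos hp
  have step1 : Af p (s / x) ≤ Af p ((2:ℝ) ^ m * s) := by
    apply hmono
    rw [div_le_iff₀ hx]
    calc s = 1 * s := (one_mul s).symm
      _ ≤ ((2:ℝ) ^ (m:ℝ) * x) * s := by
          apply mul_le_mul_of_nonneg_right _ hs0.le
          rw [div_le_iff₀ hx] at hm1
          exact hm1
      _ = (2:ℝ) ^ m * s * x := by
          rw [Real.rpow_natCast]; ring
  have step2 : Af p ((2:ℝ) ^ m * s) ≤ (2:ℝ) ^ (θ' * m) * Af p s := hiter m s hs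
  have step3 : (2:ℝ) ^ (θ' * (m:ℝ)) ≤ 2 * x ^ (-θ') := by
    have e2 : (2:ℝ) ^ (θ' * (m:ℝ)) = ((2:ℝ) ^ (m:ℝ)) ^ θ' := by
      rw [← Real.rpow_mul (by norm_num : (0:ℝ) ≤ 2), mul_comm]
    rw [e2]
    calc ((2:ℝ) ^ (m:ℝ)) ^ θ' ≤ (2 * (1/x)) ^ θ' := by
          apply Real.rpow_le_rpow (by positivity) hm3
          linarith [hθ.1]
      _ = 2 ^ θ' * (1/x) ^ θ' := Real.mul_rpow (by norm_num) (by positivity)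
      _ ≤ 2 * x ^ (-θ') := by
          apply mul_le_mul
          · have h2θ : (2:ℝ) ^ θ' ≤ 2 ^ (1:ℝ) :=
              Real.rpow_le_rpow_of_exponent_le one_le_two hθ'1.le
            rwa [Real.rpow_one] at h2θ
          · apply le_of_eq
            rw [one_div, Real.inv_rpow hx.le, ← Real.rpow_neg hx.le]
          · positivity
          · norm_num
  have hA0 : 0 ≤ Af p s := Nat.cast_nonneg _
  calc Af p (s / x) ≤ (2:ℝ) ^ (θ' * m) * Af p s := le_trans step1 step2
    _ ≤ 2 * x ^ (-θ') * Af p s := mul_le_mul_of_nonneg_right step3 hA0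

lemma key_tendsto (hp_pos : ∀ k, 0 < p k) (hp : Summable p)
    (hθ : θ ∈ Set.Ioo (0 : ℝ) 1)
    (hL : ∀ c > (0 : ℝ), Tendsto (fun x => L (c * x) / L x) atTop (𝓝 1))
    (hα : ∀ x > (0 : ℝ), Af p x = x ^ θ * L x) :
    Tendsto (fun s : ℝ => (∫ x in Set.Ioi (0:ℝ), (1 - x) * Real.exp (-x) * Af p (s / x)) / Af p s)
      atTop (𝓝 (θ * Real.Gamma (1 - θ))) := by
  set θ' : ℝ := (1 + θ)/2 with hθ'def
  have hθ'1 : θ' < 1 := by simp [hθ'def]; linarith [hθ.2]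
  have hθ'0 : 0 < θ' := by simp [hθ'def]; linarith [hθ.1]
  obtain ⟨S, hS1, hpot⟩ := potter hp_pos hp hθ hL hα
  have hmeasA : Measurable (Af p) := (Af_mono hp_pos hp).measurable
  set bound : ℝ → ℝ := fun x => (1 + x) * Real.exp (-x) * (2 * x ^ (-θ') + 1) with hbd
  have hDCT : Tendsto
      (fun s : ℝ => ∫ x in Set.Ioi (0:ℝ), (1 - x) * Real.exp (-x) * (Af p (s / x) / Af p s))
      atTop (𝓝 (∫ x in Set.Ioi (0:ℝ), (1 - x) * Real.exp (-x) * x ^ (-θ))) := by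
    apply tendsto_integral_filter_of_dominated_convergence bound
    · apply Filter.Eventually.of_forall
      intro s
      apply Measurable.aestronglyMeasurable
      exact (((continuous_const.sub continuous_id).mul
        (Real.continuous_exp.comp continuous_neg)).measurable).mul
        ((hmeasA.comp (measurable_const.div measurable_id)).div_const _)
    · filter_upwards [eventually_ge_atTop (max S (1 / p 0))] with s hs
      rw [ae_restrict_iff' measurableSet_Ioi]
      apply ae_of_all
      intro x hx
      simp only [Set.mem_Ioi] at hx
      have hsS : S ≤ s := le_trans (le_max_left _ _) hs
      have hs1 : (1:ℝ) ≤ s := le_trans hS1 hsS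
      have hs0 : (0:ℝ) < s := lt_of_lt_of_le one_pos hs1
      have hA1 : 1 ≤ Af p s := Af_pos hp_pos hp (le_trans (le_max_right _ _) hs)
      have hA0 : (0:ℝ) < Af p s := lt_of_lt_of_le one_pos hA1
      have hAx0 : (0:ℝ) ≤ Af p (s / x) := Nat.cast_nonneg _
      have hratio : Af p (s / x) / Af p s ≤ 2 * x ^ (-θ') + 1 := by
        rcases le_or_gt x 1 with hx1 | hx1
        · have hP := hpot s hsS x hx hx1
          rw [div_le_iff₀ hA0]
          have hxp : (0:ℝ) ≤ x ^ (-θ') := by positivity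
          nlinarith
        · have hmono : Af p (s / x) ≤ Af p s :=
            Af_mono hp_pos hp (div_le_self hs0.le hx1.le)
          have hxp : (0:ℝ) ≤ x ^ (-θ') := by positivity
          rw [div_le_iff₀ hA0]
          nlinarith
      have hnorm : ‖(1 - x) * Real.exp (-x) * (Af p (s / x) / Af p s)‖
          = |1 - x| * Real.exp (-x) * (Af p (s / x) / Af p s) := by
        rw [norm_mul, norm_mul, Real.norm_eq_abs, Real.norm_eq_abs, Real.norm_eq_abs,
          abs_of_pos (Real.exp_pos _), abs_of_nonneg (div_nonneg hAx0 hA0.le)]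
      rw [hnorm, hbd]
      have habs : |1 - x| ≤ 1 + x := by
        rw [abs_le]; constructor <;> linarith
      have hexp : (0:ℝ) < Real.exp (-x) := Real.exp_pos _
      have hrat0 : (0:ℝ) ≤ Af p (s / x) / Af p s := div_nonneg hAx0 hA0.le
      have hb0 : (0:ℝ) ≤ 2 * x ^ (-θ') + 1 := by positivity
      calc |1 - x| * Real.exp (-x) * (Af p (s / x) / Af p s)
          ≤ (1 + x) * Real.exp (-x) * (Af p (s / x) / Af p s) := by
            apply mul_le_mul_of_nonneg_right _ hrat0
            exact mul_le_mul_of_nonneg_right habs hexp.le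
        _ ≤ (1 + x) * Real.exp (-x) * (2 * x ^ (-θ') + 1) := by
            apply mul_le_mul_of_nonneg_left hratio
            positivity
    · have i1 : IntegrableOn (fun x => Real.exp (-x) * x ^ ((1 - θ') - 1)) (Set.Ioi (0:ℝ)) :=
        Real.GammaIntegral_convergent (by linarith)
      have i2 : IntegrableOn (fun x => Real.exp (-x) * x ^ ((2 - θ') - 1)) (Set.Ioi (0:ℝ)) :=
        Real.GammaIntegral_convergent (by linarith)
      have i3 : IntegrableOn (fun x => Real.exp (-x) * x ^ ((1:ℝ) - 1)) (Set.Ioi (0:ℝ)) :=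
        Real.GammaIntegral_convergent one_pos
      have i4 : IntegrableOn (fun x => Real.exp (-x) * x ^ ((2:ℝ) - 1)) (Set.Ioi (0:ℝ)) :=
        Real.GammaIntegral_convergent two_pos
      have combo := (((i1.const_mul 2).add (i2.const_mul 2)).add i3).add i4
      apply MeasureTheory.IntegrableOn.congr_fun combo _ measurableSet_Ioi
      intro x hx
      simp only [Set.mem_Ioi] at hx
      have e1 : x ^ ((1 - θ') - 1) = x ^ (-θ') := by norm_num
      have e2 : x ^ ((2 - θ') - 1) = x * x ^ (-θ') := by
        rw [show (2:ℝ) - θ' - 1 = -θ' + 1 by ring, Real.rpow_add hx, Real.rpow_one]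
        ring
      simp only [Pi.add_apply, hbd, e1, e2, Real.rpow_zero, Real.rpow_one,
        show (1:ℝ) - 1 = 0 by norm_num, show (2:ℝ) - 1 = 1 by norm_num]
      ring
    · rw [ae_restrict_iff' measurableSet_Ioi]
      apply ae_of_all
      intro x hx
      simp only [Set.mem_Ioi] at hx
      have hrat := Af_ratio hp_pos hp hθ hL hα (c := 1/x) (by positivity)
      have hpow : ((1:ℝ)/x) ^ θ = x ^ (-θ) := by
        rw [one_div, Real.inv_rpow hx.le, ← Real.rpow_neg hx.le]
      rw [hpow] at hrat
      have hrat' : Tendsto (fun s => Af p (s / x) / Af p s) atTop (𝓝 (x ^ (-θ))) := by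
        apply hrat.congr
        intro s
        rw [one_div_mul_eq_div]
      exact hrat'.const_mul _
  have hI : (∫ x in Set.Ioi (0:ℝ), (1 - x) * Real.exp (-x) * x ^ (-θ))
      = θ * Real.Gamma (1 - θ) := by
    have i5 : IntegrableOn (fun x => Real.exp (-x) * x ^ ((1 - θ) - 1)) (Set.Ioi (0:ℝ)) :=
      Real.GammaIntegral_convergent (by linarith [hθ.2])
    have i6 : IntegrableOn (fun x => Real.exp (-x) * x ^ ((2 - θ) - 1)) (Set.Ioi (0:ℝ)) :=
      Real.GammaIntegral_convergent (by linarith [hθ.2])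
    have hcong : ∀ x ∈ Set.Ioi (0:ℝ), (1 - x) * Real.exp (-x) * x ^ (-θ)
        = Real.exp (-x) * x ^ ((1 - θ) - 1) - Real.exp (-x) * x ^ ((2 - θ) - 1) := by
      intro x hx
      simp only [Set.mem_Ioi] at hx
      have e2 : x ^ ((2 - θ) - 1) = x * x ^ (-θ) := by
        rw [show (2:ℝ) - θ - 1 = -θ + 1 by ring, Real.rpow_add hx, Real.rpow_one]
        ring
      have e1 : x ^ ((1 - θ) - 1) = x ^ (-θ) := by norm_num
      rw [e1, e2]
      ring
    rw [setIntegral_congr_fun measurableSet_Ioi hcong, integral_sub i5 i6,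
      ← Real.Gamma_eq_integral (by linarith [hθ.2] : (0:ℝ) < 1 - θ),
      ← Real.Gamma_eq_integral (by linarith [hθ.2] : (0:ℝ) < 2 - θ)]
    have hG : Real.Gamma (2 - θ) = (1 - θ) * Real.Gamma (1 - θ) := by
      rw [show (2:ℝ) - θ = (1 - θ) + 1 by ring, Real.Gamma_add_one (by linarith [hθ.2])]
    rw [hG]
    ring
  rw [← hI]
  apply hDCT.congr
  intro s
  simp_rw [← mul_div_assoc]
  rw [integral_div]

end Main

noncomputable def Gf (p : ℕ → ℝ) (s : ℝ) : ℝ := ∑' k, p k * Real.exp (-(p k * s))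

section Main2
variable {p : ℕ → ℝ} {θ : ℝ} {L : ℝ → ℝ}

lemma Phi_tendsto (hp_pos : ∀ k, 0 < p k) (hp : Summable p)
    (hθ : θ ∈ Set.Ioo (0 : ℝ) 1)
    (hL : ∀ c > (0 : ℝ), Tendsto (fun x => L (c * x) / L x) atTop (𝓝 1))
    (hα : ∀ x > (0 : ℝ), Af p x = x ^ θ * L x) :
    Tendsto (fun s : ℝ => s * Gf p s / Af p s) atTop (𝓝 (θ * Real.Gamma (1 - θ))) := by
  apply (key_tendsto hp_pos hp hθ hL hα).congr'
  filter_upwards [eventually_gt_atTop (0:ℝ)] with s hs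
  congr 1
  rw [repr_integral hp_pos hp hs]
  calc ∑' k, s * p k * Real.exp (-(s * p k))
      = ∑' k, s * (p k * Real.exp (-(p k * s))) := by
        apply tsum_congr
        intro k
        rw [mul_comm s (p k)]
        ring
    _ = s * Gf p s := tsum_mul_left

lemma lim_one (hp_pos : ∀ k, 0 < p k) (hp : Summable p)
    (hθ : θ ∈ Set.Ioo (0 : ℝ) 1)
    (hL : ∀ c > (0 : ℝ), Tendsto (fun x => L (c * x) / L x) atTop (𝓝 1))
    (hα : ∀ x > (0 : ℝ), Af p x = x ^ θ * L x)
    {c : ℝ} (hc : 0 < c) :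
    Tendsto (fun n : ℕ => (n : ℝ) * Gf p ((n : ℝ) * c) / Af p (n : ℝ)) atTop
      (𝓝 (θ * Real.Gamma (1 - θ) * c ^ (θ - 1))) := by
  have hnat : Tendsto (fun n : ℕ => (n : ℝ)) atTop atTop := tendsto_natCast_atTop_atTop
  have hnc : Tendsto (fun n : ℕ => c * (n : ℝ)) atTop atTop := by
    apply Tendsto.const_mul_atTop hc hnat
  have h1 : Tendsto (fun n : ℕ => (c * (n:ℝ)) * Gf p (c * (n:ℝ)) / Af p (c * (n:ℝ))) atTop
      (𝓝 (θ * Real.Gamma (1 - θ))) := (Phi_tendsto hp_pos hp hθ hL hα).comp hnc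
  have h2 : Tendsto (fun n : ℕ => Af p (c * (n:ℝ)) / Af p (n:ℝ)) atTop (𝓝 (c ^ θ)) :=
    (Af_ratio hp_pos hp hθ hL hα hc).comp hnat
  have h3 := (h1.mul h2).const_mul (1/c)
  have hval : (1/c) * (θ * Real.Gamma (1 - θ) * c ^ θ) = θ * Real.Gamma (1 - θ) * c ^ (θ - 1) := by
    rw [Real.rpow_sub hc, Real.rpow_one]
    field_simp
  rw [hval] at h3
  apply h3.congr'
  filter_upwards [hnc.eventually (eventually_ge_atTop (max 1 (1 / p 0)))] with n hn
  have hA1 : 1 ≤ Af p (c * (n:ℝ)) := Af_pos hp_pos hp (le_trans (le_max_right _ _) hn)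
  have hAne : Af p (c * (n:ℝ)) ≠ 0 := by linarith
  have hGc : Gf p ((n:ℝ) * c) = Gf p (c * (n:ℝ)) := by rw [mul_comm]
  have key : ∀ a b d : ℝ, b ≠ 0 → 1/c * (c * a / b * (b / d)) = a / d := by
    intro a b d hb
    rw [div_mul_div_comm, mul_comm b d, mul_div_mul_right _ _ hb, one_div, ← mul_div_assoc,
      show c⁻¹ * (c * a) = (c⁻¹ * c) * a by ring, inv_mul_cancel₀ hc.ne', one_mul]
  rw [hGc, show c * (n:ℝ) * Gf p (c * (n:ℝ)) = c * ((n:ℝ) * Gf p (c * (n:ℝ))) by ring,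
    key ((n:ℝ) * Gf p (c * (n:ℝ))) (Af p (c * (n:ℝ))) (Af p (n:ℝ)) hAne]

lemma main_lim (hp_pos : ∀ k, 0 < p k) (hp : Summable p)
    (hθ : θ ∈ Set.Ioo (0 : ℝ) 1)
    (hL : ∀ c > (0 : ℝ), Tendsto (fun x => L (c * x) / L x) atTop (𝓝 1))
    (hα : ∀ x > (0 : ℝ), Af p x = x ^ θ * L x)
    {τ t : ℝ} (hτ : 0 < τ) (hτt : τ ≤ t) (r : ℝ) :
    Tendsto (fun n : ℕ =>
        (1 / Af p (n:ℝ)) * ∑' k, (n : ℝ) * r * p k * (Real.exp (-(p k * (n : ℝ) * (t + τ)))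
          - Real.exp (-(p k * (n : ℝ) * t))))
      atTop
      (𝓝 (θ * Real.Gamma (1 - θ) * (r * (t + τ) ^ (θ - 1) - r * t ^ (θ - 1)))) := by
  have ht : 0 < t := lt_of_lt_of_le hτ hτt
  have httτ : 0 < t + τ := by linarith
  have h1 := lim_one hp_pos hp hθ hL hα httτ
  have h2 := lim_one hp_pos hp hθ hL hα ht
  have h3 := (h1.sub h2).const_mul r
  have hval : r * (θ * Real.Gamma (1 - θ) * (t + τ) ^ (θ - 1)
      - θ * Real.Gamma (1 - θ) * t ^ (θ - 1))
      = θ * Real.Gamma (1 - θ) * (r * (t + τ) ^ (θ - 1) - r * t ^ (θ - 1)) := by ring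
  rw [hval] at h3
  apply h3.congr
  intro n
  have hn0 : (0:ℝ) ≤ (n:ℝ) := Nat.cast_nonneg n
  have hsum1 : Summable (fun k => p k * Real.exp (-(p k * ((n:ℝ) * (t + τ))))) :=
    Gf_summable hp_pos hp (by positivity)
  have hsum2 : Summable (fun k => p k * Real.exp (-(p k * ((n:ℝ) * t)))) :=
    Gf_summable hp_pos hp (by positivity)
  have hterm : ∀ k : ℕ, (n : ℝ) * r * p k * (Real.exp (-(p k * (n : ℝ) * (t + τ)))
      - Real.exp (-(p k * (n : ℝ) * t)))
      = ((n:ℝ) * r) * (p k * Real.exp (-(p k * ((n:ℝ) * (t + τ))))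
        - p k * Real.exp (-(p k * ((n:ℝ) * t)))) := by
    intro k
    rw [show p k * ((n:ℝ) * (t + τ)) = p k * (n:ℝ) * (t + τ) by ring,
      show p k * ((n:ℝ) * t) = p k * (n:ℝ) * t by ring]
    ring
  have hts : ∑' k, (n : ℝ) * r * p k * (Real.exp (-(p k * (n : ℝ) * (t + τ)))
      - Real.exp (-(p k * (n : ℝ) * t)))
      = ((n:ℝ) * r) * (Gf p ((n:ℝ) * (t + τ)) - Gf p ((n:ℝ) * t)) := by
    calc ∑' k, (n : ℝ) * r * p k * (Real.exp (-(p k * (n : ℝ) * (t + τ)))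
        - Real.exp (-(p k * (n : ℝ) * t)))
        = ∑' k, ((n:ℝ) * r) * (p k * Real.exp (-(p k * ((n:ℝ) * (t + τ))))
          - p k * Real.exp (-(p k * ((n:ℝ) * t)))) := tsum_congr hterm
      _ = ((n:ℝ) * r) * ∑' k, (p k * Real.exp (-(p k * ((n:ℝ) * (t + τ))))
          - p k * Real.exp (-(p k * ((n:ℝ) * t)))) := tsum_mul_left
      _ = ((n:ℝ) * r) * (Gf p ((n:ℝ) * (t + τ)) - Gf p ((n:ℝ) * t)) := by
          rw [Summable.tsum_sub hsum1 hsum2]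
          rfl
  rw [hts]
  simp only [div_eq_mul_inv, one_mul]
  ring

end Main2

/-- Limit cross-covariances of the occupancy and scaled missing mass processes,
`θ ∈ (0,1)`: for `0 < τ ≤ t`,
`(1/α(n)) ∑_k n t p_k (e^{−p_k n(t+τ)} − e^{−p_k n t}) → θΓ(1−θ)(t(t+τ)^{θ−1} − t^θ)`
and
`(1/α(n)) ∑_k n τ p_k (e^{−p_k n(t+τ)} − e^{−p_k n t}) → θΓ(1−θ)(τ(t+τ)^{θ−1} − τ t^{θ−1})`. -/
theorem limit_covariance_occupancy_missing_mass
    (p : ℕ → ℝ) (hp_pos : ∀ k, 0 < p k) (hp_mono : Antitone p)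
    (hp_sum : ∑' k, p k = 1)
    (θ : ℝ) (hθ : θ ∈ Set.Ioo (0 : ℝ) 1)
    (L : ℝ → ℝ)
    (hL : ∀ c > (0 : ℝ), Tendsto (fun x => L (c * x) / L x) atTop (𝓝 1))
    (hα : ∀ x > (0 : ℝ), ((Set.ncard {i : ℕ | p i ≥ 1 / x} : ℝ)) = x ^ θ * L x)
    (τ t : ℝ) (hτ : 0 < τ) (hτt : τ ≤ t) :
    Tendsto (fun n : ℕ =>
        (1 / ((Set.ncard {i : ℕ | p i ≥ 1 / (n : ℝ)} : ℝ))) *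
          ∑' k, (n : ℝ) * t * p k * (Real.exp (-(p k * (n : ℝ) * (t + τ)))
            - Real.exp (-(p k * (n : ℝ) * t))))
      atTop
      (𝓝 (θ * Real.Gamma (1 - θ) * (t * (t + τ) ^ (θ - 1) - t ^ θ))) ∧
    Tendsto (fun n : ℕ =>
        (1 / ((Set.ncard {i : ℕ | p i ≥ 1 / (n : ℝ)} : ℝ))) *
          ∑' k, (n : ℝ) * τ * p k * (Real.exp (-(p k * (n : ℝ) * (t + τ)))
            - Real.exp (-(p k * (n : ℝ) * t))))
      atTop
      (𝓝 (θ * Real.Gamma (1 - θ) * (τ * (t + τ) ^ (θ - 1) - τ * t ^ (θ - 1)))) := by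
  have hp : Summable p := summable_of_tsum_one hp_pos hp_sum
  have hα' : ∀ x > (0 : ℝ), Af p x = x ^ θ * L x := hα
  have ht : 0 < t := lt_of_lt_of_le hτ hτt
  constructor
  · have h := main_lim hp_pos hp hθ hL hα' hτ hτt t
    have hval : θ * Real.Gamma (1 - θ) * (t * (t + τ) ^ (θ - 1) - t * t ^ (θ - 1))
        = θ * Real.Gamma (1 - θ) * (t * (t + τ) ^ (θ - 1) - t ^ θ) := by
      rw [Real.rpow_sub ht, Real.rpow_one]
      field_simp
    rw [hval] at h
    exact h
  · exact main_lim hp_pos hp hθ hL hα' hτ hτt τ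
end
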